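/- arXiv:1503.09146 — 7 statements merged into one kernel-verified Lean document; each statement's English description precedes it below -/
import Mathlib

section
/- Let M be a complex μ×μ matrix and suppose the subgroup of GL(μ,ℂ) generated by the diagonal torus U(1)^μ (diagonal matrices with unit-modulus entries) and the real special orthogonal group SO(μ) is considered. Then this generated subgroup equals the full unitary group U(μ). -/
open Matrix Finset

namespace Stmt1Aux

variable {α : Type*}

/-- Embed an `n × n` matrix into an `(n+1) × (n+1)` matrix as the lower-right block,
with a `1` in the top-left corner. -/
def lift [Zero α] [One α] {n : ℕ} (X : Matrix (Fin n) (Fin n) α) :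
    Matrix (Fin (n+1)) (Fin (n+1)) α :=
  Matrix.of (Fin.cons (Fin.cons 1 0) (fun i => Fin.cons 0 (X i)))

section ZeroOne
variable [Zero α] [One α] {n : ℕ} (X : Matrix (Fin n) (Fin n) α)

@[simp] lemma lift_zero_zero : lift X 0 0 = 1 := rfl
@[simp] lemma lift_zero_succ (j : Fin n) : lift X 0 j.succ = 0 := by
  simp [lift, Matrix.of_apply, Fin.cons_zero, Fin.cons_succ]
@[simp] lemma lift_succ_zero (i : Fin n) : lift X i.succ 0 = 0 := by
  simp [lift, Matrix.of_apply, Fin.cons_zero, Fin.cons_succ]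
@[simp] lemma lift_succ_succ (i j : Fin n) : lift X i.succ j.succ = X i j := by
  simp [lift, Matrix.of_apply, Fin.cons_succ]

lemma lift_transpose : (lift X)ᵀ = lift Xᵀ := by
  ext i j
  refine Fin.cases ?_ (fun i' => ?_) i <;> refine Fin.cases ?_ (fun j' => ?_) j <;>
    simp [Matrix.transpose_apply]

end ZeroOne

lemma lift_map [Zero α] [One α] {β : Type*} [Zero β] [One β] {n : ℕ}
    (X : Matrix (Fin n) (Fin n) α) (f : α → β) (h0 : f 0 = 0) (h1 : f 1 = 1) :
    (lift X).map f = lift (X.map f) := by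
  ext i j
  refine Fin.cases ?_ (fun i' => ?_) i <;> refine Fin.cases ?_ (fun j' => ?_) j <;>
    simp [Matrix.map_apply, h0, h1]

section Ring
variable [NonAssocSemiring α] {n : ℕ}

lemma lift_one : lift (1 : Matrix (Fin n) (Fin n) α) = 1 := by
  classical
  ext i j
  refine Fin.cases ?_ (fun i' => ?_) i <;> refine Fin.cases ?_ (fun j' => ?_) j <;>
    simp [Matrix.one_apply, Fin.succ_ne_zero, (Fin.succ_ne_zero _).symm, Fin.succ_inj]

lemma lift_diagonal (d : Fin n → α) :
    lift (Matrix.diagonal d) = Matrix.diagonal (Fin.cons 1 d) := by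
  classical
  ext i j
  refine Fin.cases ?_ (fun i' => ?_) i <;> refine Fin.cases ?_ (fun j' => ?_) j <;>
    simp [Matrix.diagonal_apply, Fin.succ_ne_zero, (Fin.succ_ne_zero _).symm, Fin.succ_inj]

lemma lift_mul (X Y : Matrix (Fin n) (Fin n) α) :
    lift (X * Y) = lift X * lift Y := by
  ext i j
  rw [Matrix.mul_apply, Fin.sum_univ_succ]
  refine Fin.cases ?_ (fun i' => ?_) i <;> refine Fin.cases ?_ (fun j' => ?_) j <;>
    simp [Matrix.mul_apply]

end Ring

lemma lift_det [CommRing α] {n : ℕ} (X : Matrix (Fin n) (Fin n) α) :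
    (lift X).det = X.det := by
  rw [Matrix.det_succ_row_zero, Fin.sum_univ_succ]
  simp only [lift_zero_succ, mul_zero, zero_mul, Finset.sum_const_zero, add_zero]
  have h : (lift X).submatrix Fin.succ Fin.succ = X := by
    ext i j; simp
  rw [Fin.succAbove_zero, h]
  simp

/-- Any nonnegative-first-coordinate unit vector can be mapped to `e₀` by a rotation. -/
lemma exists_so (n : ℕ) (v : Fin (n+1) → ℝ) (hv : ∑ i, v i ^ 2 = 1) (h0 : 0 ≤ v 0) :
    ∃ B : Matrix (Fin (n+1)) (Fin (n+1)) ℝ, Bᵀ * B = 1 ∧ B.det = 1 ∧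
      (∀ i, ∑ j, B i j * v j = if i = 0 then 1 else 0) := by
  classical
  by_cases h1 : v 0 = 1
  · refine ⟨1, by simp, by simp, fun i => ?_⟩
    have hrest : ∑ i ∈ univ.erase 0, v i ^ 2 = 0 := by
      have h := Finset.add_sum_erase univ (fun i => v i ^ 2) (mem_univ (0 : Fin (n+1)))
      rw [hv] at h
      have h' : v 0 ^ 2 + ∑ x ∈ univ.erase 0, v x ^ 2 = 1 := h
      nlinarith [h']
    have hz : ∀ i, i ≠ 0 → v i = 0 := by
      intro i hi
      have := (Finset.sum_eq_zero_iff_of_nonneg (fun j _ => sq_nonneg (v j))).mp hrest i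
        (Finset.mem_erase.mpr ⟨hi, mem_univ i⟩)
      exact (pow_eq_zero_iff two_ne_zero).mp this
    have : ∑ j, (1 : Matrix (Fin (n+1)) (Fin (n+1)) ℝ) i j * v j = v i := by
      simp [Matrix.one_apply, Finset.sum_ite_eq, ite_mul]
    rw [this]
    by_cases hi : i = 0
    · simp [hi, h1]
    · simp [hi, hz i hi]
  · -- v 0 < 1, and the dimension is at least 2
    have hle : v 0 ^ 2 ≤ 1 := by
      rw [← hv]
      exact Finset.single_le_sum (fun j _ => sq_nonneg (v j)) (mem_univ 0)
    have hlt : v 0 < 1 := lt_of_le_of_ne (by nlinarith) h1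
    -- dimension ≥ 2
    obtain ⟨m, rfl⟩ : ∃ m, n = m + 1 := by
      rcases n with _ | m
      · exfalso
        have : v 0 ^ 2 = 1 := by simpa [Fin.sum_univ_one] using hv
        nlinarith
      · exact ⟨m, rfl⟩
    set e : Fin (m+2) → ℝ := fun i => if i = 0 then 1 else 0 with he
    have hc2 : (0:ℝ) < 2 - 2 * v 0 := by linarith
    set s : ℝ := Real.sqrt (2 - 2 * v 0) with hs
    have hspos : 0 < s := Real.sqrt_pos.mpr hc2
    have hs2 : s ^ 2 = 2 - 2 * v 0 := Real.sq_sqrt hc2.le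
    set w : Fin (m+2) → ℝ := fun i => (v i - e i) / s with hw
    have hve : ∑ i, v i * e i = v 0 := by
      simp [he, mul_ite, Finset.sum_ite_eq']
    have hee : ∑ i, e i ^ 2 = 1 := by
      simp [he, ite_pow, Finset.sum_ite_eq']
    have hsub : ∑ i, (v i - e i) ^ 2 = 2 - 2 * v 0 := by
      have : ∀ i, (v i - e i) ^ 2 = v i ^ 2 - 2 * (v i * e i) + e i ^ 2 := fun i => by ring
      rw [Finset.sum_congr rfl fun i _ => this i, Finset.sum_add_distrib,
        Finset.sum_sub_distrib, ← Finset.mul_sum, hv, hve, hee]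
      ring
    have hww : ∑ i, w i ^ 2 = 1 := by
      have : ∀ i, w i ^ 2 = (v i - e i) ^ 2 / (2 - 2 * v 0) := fun i => by
        rw [hw]; rw [div_pow, hs2]
      rw [Finset.sum_congr rfl fun i _ => this i, ← Finset.sum_div, hsub,
        div_self hc2.ne']
    have hwv : ∑ i, w i * v i = s / 2 := by
      have : ∀ i, w i * v i = (v i * v i - v i * e i) / s := fun i => by
        rw [hw]; field_simp
      rw [Finset.sum_congr rfl fun i _ => this i, ← Finset.sum_div]
      have hvv : ∑ i, (v i * v i - v i * e i) = (2 - 2 * v 0) / 2 := by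
        rw [Finset.sum_sub_distrib]
        have : ∑ i, v i * v i = 1 := by
          rw [← hv]; exact Finset.sum_congr rfl fun i _ => (sq (v i)).symm
        rw [this, hve]; ring
      rw [hvv, ← hs2]
      field_simp
    -- Householder reflection
    set H : Matrix (Fin (m+2)) (Fin (m+2)) ℝ :=
      Matrix.of (fun i j => (if i = j then (1:ℝ) else 0) - 2 * (w i * w j)) with hH
    have hHapp : ∀ i j, H i j = (if i = j then 1 else 0) - 2 * (w i * w j) := fun i j => rfl
    have hHsymm : Hᵀ = H := by
      ext i j
      rw [Matrix.transpose_apply, hHapp, hHapp]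
      by_cases hij : i = j
      · subst hij; ring
      · rw [if_neg hij, if_neg (Ne.symm hij)]; ring
    have hHH : H * H = 1 := by
      ext i j
      rw [Matrix.mul_apply]
      have expand : ∀ k, H i k * H k j =
          ((if i = k then 1 else 0) * (if k = j then 1 else 0)
            - 2 * (w i * ((if k = j then 1 else 0) * w k))
            - 2 * ((if i = k then 1 else 0) * w k) * w j)
            + 4 * (w i * w j) * w k ^ 2 := fun k => by
        rw [hHapp, hHapp]; ring
      rw [Finset.sum_congr rfl fun k _ => expand k, Finset.sum_add_distrib,
        ← Finset.mul_sum, hww]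
      have t1 : ∑ k, (if i = k then (1:ℝ) else 0) * (if k = j then 1 else 0)
          = if i = j then 1 else 0 := by
        simp [ite_mul, Finset.sum_ite_eq]
      have t2 : ∑ k, ((if i = k then (1:ℝ) else 0)
            * (if k = j then 1 else 0)
            - 2 * (w i * ((if k = j then 1 else 0) * w k))
            - 2 * ((if i = k then 1 else 0) * w k) * w j)
          = (if i = j then 1 else 0) - 2 * (w i * w j) - 2 * (w i * w j) := by
        rw [Finset.sum_sub_distrib, Finset.sum_sub_distrib, t1]
        congr 1
        · congr 1
          rw [← Finset.mul_sum]
          congr 1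
          simp [ite_mul, Finset.sum_ite_eq]
        · have : ∀ k, 2 * ((if i = k then (1:ℝ) else 0) * w k) * w j
              = (if i = k then 2 * w k * w j else 0) := fun k => by
            by_cases h : i = k <;> simp [h]
          rw [Finset.sum_congr rfl fun k _ => this k, Finset.sum_ite_eq]
          simp; ring
      rw [t2, Matrix.one_apply]
      ring
    have hHdet : H.det = -1 := by
      have : H = 1 + replicateCol Unit (fun i => (-2 : ℝ) * w i) * replicateRow Unit w := by
        ext i j
        rw [hHapp]
        simp [Matrix.add_apply, Matrix.one_apply, Matrix.mul_apply]
        ring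
      rw [this, det_one_add_replicateCol_mul_replicateRow]
      have : w ⬝ᵥ (fun i => (-2:ℝ) * w i) = -2 := by
        simp only [dotProduct]
        have : ∀ i, w i * ((-2:ℝ) * w i) = -2 * w i ^ 2 := fun i => by ring
        rw [Finset.sum_congr rfl fun i _ => this i, ← Finset.mul_sum, hww]
        ring
      rw [this]; norm_num
    have hHv : ∀ i, ∑ j, H i j * v j = e i := by
      intro i
      have : ∀ j, H i j * v j = (if i = j then v j else 0) - 2 * w i * (w j * v j) := fun j => by
        rw [hHapp]; by_cases h : i = j <;> simp [h] <;> ring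
      rw [Finset.sum_congr rfl fun j _ => this j, Finset.sum_sub_distrib, ← Finset.mul_sum]
      rw [Finset.sum_ite_eq]
      have : ∑ j, w j * v j = s / 2 := hwv
      rw [this]
      have hwi : w i * s = v i - e i := by
        rw [hw]; field_simp
      simp only [mem_univ, if_true]
      have : 2 * w i * (s / 2) = v i - e i := by
        rw [← hwi]; ring
      rw [this]; ring
    -- fix the determinant with a diagonal flip at the last index
    set ℓ : Fin (m+2) := Fin.last (m+1) with hℓ
    have hℓ0 : ℓ ≠ 0 := by
      rw [hℓ]
      simp [Fin.ext_iff]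
    set D : Matrix (Fin (m+2)) (Fin (m+2)) ℝ :=
      Matrix.diagonal (fun i => if i = ℓ then -1 else 1) with hD
    refine ⟨D * H, ?_, ?_, ?_⟩
    · rw [Matrix.transpose_mul, Matrix.diagonal_transpose, hHsymm, Matrix.mul_assoc,
        ← Matrix.mul_assoc D, Matrix.diagonal_mul_diagonal]
      have : (fun i => (if i = ℓ then (-1:ℝ) else 1) * (if i = ℓ then -1 else 1))
          = fun _ => 1 := by
        funext i; by_cases h : i = ℓ <;> simp [h]
      rw [this, Matrix.diagonal_one, Matrix.one_mul, hHH]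
    · rw [Matrix.det_mul, hHdet, hD, Matrix.det_diagonal]
      simp [Finset.prod_ite_eq']
    · intro i
      have : ∀ j, (D * H) i j = (if i = ℓ then (-1:ℝ) else 1) * H i j := fun j => by
        rw [hD, Matrix.diagonal_mul]
      rw [Finset.sum_congr rfl fun j _ => by rw [this j, mul_assoc]]
      rw [← Finset.mul_sum, hHv i]
      by_cases hi : i = 0
      · simp [hi, he, hℓ0.symm, (Ne.symm (hi ▸ hℓ0) : (0:Fin (m+2)) ≠ ℓ)]
      · by_cases hiℓ : i = ℓ <;> simp [hi, hiℓ, he, hℓ0]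

/-- Matrix-level generators: diagonal unitaries and special orthogonal matrices. -/
def gens (n : ℕ) : Set (Matrix (Fin n) (Fin n) ℂ) :=
  { M | ∃ d : Fin n → ℂ, (∀ i, ‖d i‖ = 1) ∧ M = Matrix.diagonal d } ∪
  { M | ∃ B : Matrix (Fin n) (Fin n) ℝ, Bᵀ * B = 1 ∧ B.det = 1 ∧ M = B.map Complex.ofReal }

lemma map_ofReal_mul {n : ℕ} (B C : Matrix (Fin n) (Fin n) ℝ) :
    (B * C).map Complex.ofReal = B.map Complex.ofReal * C.map Complex.ofReal := by
  ext i j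
  simp [Matrix.mul_apply, Matrix.map_apply]

lemma map_ofReal_one {n : ℕ} :
    (1 : Matrix (Fin n) (Fin n) ℝ).map Complex.ofReal = 1 := by
  ext i j
  by_cases h : i = j <;> simp [Matrix.one_apply, h]

lemma diag_star_mul {n : ℕ} (d : Fin n → ℂ) (hd : ∀ i, ‖d i‖ = 1) :
    Matrix.diagonal (star d) * Matrix.diagonal d = 1 := by
  rw [Matrix.diagonal_mul_diagonal]
  have h1 : ∀ i, star (d i) * d i = (1:ℂ) := by
    intro i
    have h2 : (starRingEnd ℂ) (d i) * d i = ((‖d i‖ : ℝ) : ℂ) ^ 2 := by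
      rw [mul_comm, Complex.mul_conj, ← Complex.sq_norm]
      norm_cast
    rw [show star (d i) = (starRingEnd ℂ) (d i) from rfl, h2, hd i]
    norm_num
  have h : (fun i => star d i * d i) = fun _ => (1:ℂ) := funext fun i => h1 i
  rw [h]
  exact Matrix.diagonal_one

lemma map_conjTranspose {n : ℕ} (B : Matrix (Fin n) (Fin n) ℝ) :
    (B.map Complex.ofReal)ᴴ = Bᵀ.map Complex.ofReal := by
  ext i j
  simp [Matrix.conjTranspose_apply, Matrix.map_apply, Complex.conj_ofReal]

lemma ortho_unitary {n : ℕ} {B : Matrix (Fin n) (Fin n) ℝ} (hB : Bᵀ * B = 1) :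
    (B.map Complex.ofReal)ᴴ * B.map Complex.ofReal = 1 := by
  rw [map_conjTranspose, ← map_ofReal_mul, hB, map_ofReal_one]

lemma lift_mem_closure {n : ℕ} {X : Matrix (Fin n) (Fin n) ℂ}
    (hX : X ∈ Submonoid.closure (gens n)) :
    lift X ∈ Submonoid.closure (gens (n+1)) := by
  induction hX using Submonoid.closure_induction with
  | mem x hx =>
      apply Submonoid.subset_closure
      rcases hx with ⟨d, hd, rfl⟩ | ⟨B, hB1, hB2, rfl⟩
      · exact Or.inl ⟨Fin.cons 1 d,
          fun i => Fin.cases (by simp) (fun i' => hd i') i, lift_diagonal d⟩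
      · refine Or.inr ⟨lift B, ?_, ?_, ?_⟩
        · rw [lift_transpose, ← lift_mul, hB1, lift_one]
        · rw [lift_det, hB2]
        · exact (lift_map B Complex.ofReal (by simp) (by simp)).symm
  | one => rw [lift_one]; exact one_mem _
  | mul x y hx hy ihx ihy => rw [lift_mul]; exact mul_mem ihx ihy

lemma unitary_mem_closure :
    ∀ (n : ℕ) (U : Matrix (Fin n) (Fin n) ℂ), Uᴴ * U = 1 →
      U ∈ Submonoid.closure (gens n) := by
  intro n
  induction n with
  | zero =>
      intro U _
      have : U = 1 := Subsingleton.elim U 1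
      rw [this]; exact one_mem _
  | succ n ih =>
      intro U hU
      -- the first column of `U` is a unit vector
      have hcolC : ∑ i, (starRingEnd ℂ) (U i 0) * U i 0 = 1 := by
        have h := congrFun (congrFun hU 0) 0
        simpa [Matrix.mul_apply, Matrix.conjTranspose_apply, Matrix.one_apply] using h
      have hcol : ∑ i, ‖U i 0‖ ^ 2 = 1 := by
        have h2 : ∑ i, ((‖U i 0‖ ^ 2 : ℝ) : ℂ) = 1 := by
          rw [← hcolC]
          refine Finset.sum_congr rfl fun i _ => ?_
          rw [Complex.sq_norm, mul_comm, Complex.mul_conj]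
        exact_mod_cast h2
      -- phase adjustment
      set d : Fin (n+1) → ℂ := fun i =>
        if U i 0 = 0 then 1 else (starRingEnd ℂ) (U i 0) / (‖U i 0‖ : ℂ) with hd
      have habs : ∀ i, ‖d i‖ = 1 := by
        intro i
        rw [hd]
        by_cases h : U i 0 = 0
        · simp [h]
        · have hne : ‖U i 0‖ ≠ 0 := by simpa using h
          simp only [h, if_false, norm_div, Complex.norm_conj, Complex.norm_real,
            Real.norm_eq_abs, abs_of_nonneg (norm_nonneg _)]
          exact div_self hne
      have hdU : ∀ i, d i * U i 0 = (‖U i 0‖ : ℂ) := by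
        intro i
        rw [hd]
        by_cases h : U i 0 = 0
        · simp [h]
        · have hne : (‖U i 0‖ : ℂ) ≠ 0 := by simpa using h
          simp only [h, if_false]
          rw [div_mul_eq_mul_div, mul_comm, Complex.mul_conj, div_eq_iff hne,
            ← Complex.ofReal_mul]
          norm_cast
          rw [Complex.normSq_eq_norm_sq, sq]
      -- rotate the (now nonnegative real) first column onto `e₀`
      obtain ⟨B, hB1, hB2, hB3⟩ := exists_so n (fun i => ‖U i 0‖) hcol
        (norm_nonneg _)
      set Bc : Matrix (Fin (n+1)) (Fin (n+1)) ℂ := B.map Complex.ofReal with hBc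
      have hBcU : Bcᴴ * Bc = 1 := ortho_unitary hB1
      set M : Matrix (Fin (n+1)) (Fin (n+1)) ℂ := Bc * (Matrix.diagonal d * U) with hM
      have hDunit : (Matrix.diagonal d)ᴴ * Matrix.diagonal d = 1 := by
        rw [Matrix.diagonal_conjTranspose]
        exact diag_star_mul d habs
      have hMunit : Mᴴ * M = 1 := by
        rw [hM, Matrix.conjTranspose_mul]
        rw [Matrix.mul_assoc ((Matrix.diagonal d * U)ᴴ), ← Matrix.mul_assoc Bcᴴ,
          hBcU, Matrix.one_mul]
        rw [Matrix.conjTranspose_mul, Matrix.mul_assoc,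
          ← Matrix.mul_assoc ((Matrix.diagonal d)ᴴ), hDunit, Matrix.one_mul, hU]
      have hMcol : ∀ i, M i 0 = if i = 0 then 1 else 0 := by
        intro i
        rw [hM, Matrix.mul_apply]
        have hterm : ∀ j, Bc i j * (Matrix.diagonal d * U) j 0
            = ((B i j * ‖U j 0‖ : ℝ) : ℂ) := by
          intro j
          rw [hBc, Matrix.map_apply, Matrix.diagonal_mul, hdU j, ← Complex.ofReal_mul]
        rw [Finset.sum_congr rfl fun j _ => hterm j, ← Complex.ofReal_sum, hB3 i]
        split_ifs <;> norm_num
      have hMrow : ∀ j, M 0 j = if j = 0 then 1 else 0 := by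
        intro j
        have h := congrFun (congrFun hMunit 0) j
        rw [Matrix.mul_apply] at h
        have hterm : ∀ i, Mᴴ 0 i * M i j = if i = 0 then M 0 j else 0 := by
          intro i
          rw [Matrix.conjTranspose_apply, hMcol i]
          by_cases hi : i = 0 <;> simp [hi]
        rw [Finset.sum_congr rfl fun i _ => hterm i, Finset.sum_ite_eq'] at h
        simp only [mem_univ, if_true] at h
        rw [h, Matrix.one_apply]
        by_cases hj : j = 0 <;> simp [hj, eq_comm]
      set U' : Matrix (Fin n) (Fin n) ℂ := Matrix.of (fun i j => M i.succ j.succ) with hU'def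
      have hMlift : M = lift U' := by
        ext i j
        refine Fin.cases ?_ (fun i' => ?_) i
        · refine Fin.cases ?_ (fun j' => ?_) j
          · rw [hMcol 0]; simp
          · rw [hMrow j'.succ]; simp [Fin.succ_ne_zero]
        · refine Fin.cases ?_ (fun j' => ?_) j
          · rw [hMcol i'.succ]; simp [Fin.succ_ne_zero]
          · simp [hU'def]
      have hU'unit : U'ᴴ * U' = 1 := by
        ext j k
        have h := congrFun (congrFun hMunit j.succ) k.succ
        rw [Matrix.mul_apply, Fin.sum_univ_succ, Matrix.conjTranspose_apply,
          hMrow j.succ] at h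
        simp only [Fin.succ_ne_zero, if_false, star_zero, zero_mul, zero_add] at h
        rw [Matrix.mul_apply]
        have hterm : ∀ i : Fin n, U'ᴴ j i * U' i k
            = Mᴴ j.succ i.succ * M i.succ k.succ := fun i => rfl
        rw [Finset.sum_congr rfl fun i _ => hterm i, h, Matrix.one_apply, Matrix.one_apply]
        simp [Fin.succ_inj]
      have hMmem : M ∈ Submonoid.closure (gens (n+1)) := by
        rw [hMlift]
        exact lift_mem_closure (ih U' hU'unit)
      -- reassemble U
      have hfinal : Matrix.diagonal (star d) * (Bᵀ.map Complex.ofReal * M) = U := by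
        rw [hM, ← Matrix.mul_assoc (Bᵀ.map Complex.ofReal), hBc, ← map_ofReal_mul, hB1,
          map_ofReal_one, Matrix.one_mul, ← Matrix.mul_assoc, diag_star_mul d habs,
          Matrix.one_mul]
      rw [← hfinal]
      refine mul_mem (Submonoid.subset_closure (Or.inl ⟨star d, fun i => ?_, rfl⟩))
        (mul_mem (Submonoid.subset_closure (Or.inr ⟨Bᵀ, ?_, ?_, rfl⟩)) hMmem)
      · rw [Pi.star_apply, show star (d i) = (starRingEnd ℂ) (d i) from rfl,
          Complex.norm_conj]
        exact habs i
      · rw [Matrix.transpose_transpose]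
        exact mul_eq_one_comm.mp hB1
      · rw [Matrix.det_transpose]
        exact hB2

/-- The GL-level generator set. -/
def glGens (mu : ℕ) : Set (GL (Fin mu) ℂ) :=
  { A : GL (Fin mu) ℂ | ∃ d : Fin mu → ℂ, (∀ i, ‖d i‖ = 1) ∧
            (A : Matrix (Fin mu) (Fin mu) ℂ) = Matrix.diagonal d }
      ∪ { A : GL (Fin mu) ℂ | ∃ B : Matrix (Fin mu) (Fin mu) ℝ, Bᵀ * B = 1 ∧ B.det = 1 ∧
            (A : Matrix (Fin mu) (Fin mu) ℂ) = B.map Complex.ofReal }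

lemma exists_gl (mu : ℕ) {m : Matrix (Fin mu) (Fin mu) ℂ}
    (hm : m ∈ Submonoid.closure (gens mu)) :
    ∃ A : GL (Fin mu) ℂ, (A : Matrix (Fin mu) (Fin mu) ℂ) = m ∧
      A ∈ Subgroup.closure (glGens mu) := by
  induction hm using Submonoid.closure_induction with
  | mem x hx =>
      rcases hx with ⟨d, hd, rfl⟩ | ⟨B, hB1, hB2, rfl⟩
      · refine ⟨⟨Matrix.diagonal d, Matrix.diagonal (star d), ?_, diag_star_mul d hd⟩,
          rfl, Subgroup.subset_closure (Or.inl ⟨d, hd, rfl⟩)⟩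
        exact mul_eq_one_comm.mp (diag_star_mul d hd)
      · refine ⟨⟨B.map Complex.ofReal, Bᵀ.map Complex.ofReal, ?_, ?_⟩,
          rfl, Subgroup.subset_closure (Or.inr ⟨B, hB1, hB2, rfl⟩)⟩
        · rw [← map_ofReal_mul, mul_eq_one_comm.mp hB1, map_ofReal_one]
        · rw [← map_ofReal_mul, hB1, map_ofReal_one]
  | one => exact ⟨1, Units.val_one, one_mem _⟩
  | mul x y hx hy ihx ihy =>
      obtain ⟨Ax, hAx, hAxc⟩ := ihx
      obtain ⟨Ay, hAy, hAyc⟩ := ihy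
      exact ⟨Ax * Ay, by rw [Units.val_mul, hAx, hAy], mul_mem hAxc hAyc⟩

/-- The unitary matrices form a subgroup of `GL`. -/
def unitarySubgroup (mu : ℕ) : Subgroup (GL (Fin mu) ℂ) where
  carrier := { A | (A : Matrix (Fin mu) (Fin mu) ℂ) ∈ Matrix.unitaryGroup (Fin mu) ℂ }
  one_mem' := by
    simp only [Set.mem_setOf_eq, Units.val_one]
    exact one_mem _
  mul_mem' := by
    intro a b ha hb
    simp only [Set.mem_setOf_eq, Units.val_mul] at *
    exact mul_mem ha hb
  inv_mem' := by
    intro a ha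
    simp only [Set.mem_setOf_eq] at *
    have h2 : (a : Matrix (Fin mu) (Fin mu) ℂ) * star (a : Matrix (Fin mu) (Fin mu) ℂ) = 1 :=
      Matrix.mem_unitaryGroup_iff.mp ha
    have hval : ((a⁻¹ : GL (Fin mu) ℂ) : Matrix (Fin mu) (Fin mu) ℂ)
        = star (a : Matrix (Fin mu) (Fin mu) ℂ) := by
      calc ((a⁻¹ : GL (Fin mu) ℂ) : Matrix (Fin mu) (Fin mu) ℂ)
          = ↑a⁻¹ * ((a : Matrix (Fin mu) (Fin mu) ℂ) * star ↑a) := by rw [h2, mul_one]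
        _ = (↑a⁻¹ * ↑a) * star (a : Matrix (Fin mu) (Fin mu) ℂ) := by rw [mul_assoc]
        _ = star (a : Matrix (Fin mu) (Fin mu) ℂ) := by rw [Units.inv_mul, one_mul]
    rw [hval]
    exact Unitary.star_mem ha

end Stmt1Aux

open Stmt1Aux in
/-- The subgroup of `GL(μ,ℂ)` generated by the diagonal torus `U(1)^μ`
(diagonal matrices with unit-modulus entries) and the real special orthogonal group
`SO(μ)` equals the full unitary group `U(μ)`. -/
theorem stmt1 (μ : ℕ) :
    (Subgroup.closure
        ({ A : GL (Fin μ) ℂ | ∃ d : Fin μ → ℂ, (∀ i, ‖d i‖ = 1) ∧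
            (A : Matrix (Fin μ) (Fin μ) ℂ) = Matrix.diagonal d }
          ∪ { A : GL (Fin μ) ℂ | ∃ B : Matrix (Fin μ) (Fin μ) ℝ, Bᵀ * B = 1 ∧ B.det = 1 ∧
            (A : Matrix (Fin μ) (Fin μ) ℂ) = B.map Complex.ofReal }) : Set (GL (Fin μ) ℂ))
      = { A : GL (Fin μ) ℂ | (A : Matrix (Fin μ) (Fin μ) ℂ) ∈ Matrix.unitaryGroup (Fin μ) ℂ } := by
  have hset : ({ A : GL (Fin μ) ℂ | ∃ d : Fin μ → ℂ, (∀ i, ‖d i‖ = 1) ∧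
            (A : Matrix (Fin μ) (Fin μ) ℂ) = Matrix.diagonal d }
          ∪ { A : GL (Fin μ) ℂ | ∃ B : Matrix (Fin μ) (Fin μ) ℝ, Bᵀ * B = 1 ∧ B.det = 1 ∧
            (A : Matrix (Fin μ) (Fin μ) ℂ) = B.map Complex.ofReal }) = glGens μ := rfl
  rw [hset]
  apply Set.Subset.antisymm
  · intro A hA
    rw [SetLike.mem_coe] at hA
    refine (Subgroup.closure_le (unitarySubgroup μ)).mpr ?_ hA
    intro X hX
    rcases hX with ⟨d, hd, hXd⟩ | ⟨B, hB1, _, hXB⟩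
    · show (X : Matrix (Fin μ) (Fin μ) ℂ) ∈ Matrix.unitaryGroup (Fin μ) ℂ
      rw [Matrix.mem_unitaryGroup_iff', hXd, Matrix.star_eq_conjTranspose,
        Matrix.diagonal_conjTranspose]
      exact diag_star_mul d hd
    · show (X : Matrix (Fin μ) (Fin μ) ℂ) ∈ Matrix.unitaryGroup (Fin μ) ℂ
      rw [Matrix.mem_unitaryGroup_iff', hXB, Matrix.star_eq_conjTranspose]
      exact ortho_unitary hB1
  · intro A hA
    rw [Set.mem_setOf_eq] at hA
    have hU : ((A : Matrix (Fin μ) (Fin μ) ℂ))ᴴ * (A : Matrix (Fin μ) (Fin μ) ℂ) = 1 := by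
      rw [← Matrix.star_eq_conjTranspose]
      exact Matrix.mem_unitaryGroup_iff'.mp hA
    obtain ⟨A', hA'1, hA'2⟩ := exists_gl μ (unitary_mem_closure μ _ hU)
    have : A' = A := Units.ext hA'1
    rw [← this]
    exact hA'2
end

section
/- The subgroup of GL(μ,ℂ) generated by the group (ℝ⁺ × U(1))^μ of diagonal matrices with nonzero complex entries and the complex special orthogonal group SO(μ,ℂ) equals all of GL(μ,ℂ). -/
open Matrix

namespace Stmt2Aux

variable {μ : ℕ}

/-- A matrix that is the identity except for a 2×2 block `(a b; c d)` at rows/cols `i, j`. -/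
def pl (i j : Fin μ) (a b c d : ℂ) : Matrix (Fin μ) (Fin μ) ℂ := fun k l =>
  if k = i then (if l = i then a else if l = j then b else 0)
  else if k = j then (if l = i then c else if l = j then d else 0)
  else if l = k then 1 else 0

lemma sum_pair_eq {i j : Fin μ} (hij : i ≠ j) (f : Fin μ → ℂ)
    (hf : ∀ m, m ≠ i → m ≠ j → f m = 0) : ∑ m, f m = f i + f j := by
  rw [← Finset.sum_pair hij]
  refine (Finset.sum_subset (Finset.subset_univ _) ?_).symm
  intro m _ hm
  simp only [Finset.mem_insert, Finset.mem_singleton] at hm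
  push_neg at hm
  exact hf m hm.1 hm.2

lemma pl_mul {i j : Fin μ} (hij : i ≠ j) (a b c d a' b' c' d' : ℂ) :
    pl i j a b c d * pl i j a' b' c' d' =
      pl i j (a*a'+b*c') (a*b'+b*d') (c*a'+d*c') (c*b'+d*d') := by
  ext k l
  rw [Matrix.mul_apply]
  by_cases hk : k = i ∨ k = j
  · have hsum : ∑ m, pl i j a b c d k m * pl i j a' b' c' d' m l =
        pl i j a b c d k i * pl i j a' b' c' d' i l +
        pl i j a b c d k j * pl i j a' b' c' d' j l := by
      refine sum_pair_eq hij _ ?_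
      intro m hmi hmj
      rcases hk with hk | hk <;> subst hk <;>
        simp [pl, hij, hmi, hmj, hij.symm]
    rw [hsum]
    rcases hk with hk | hk <;> subst hk <;>
      simp only [pl, hij, hij.symm, if_true, if_neg, if_pos, eq_self_iff_true] <;>
      split_ifs <;> (try simp_all) <;> ring
  · push_neg at hk
    have hsum : ∑ m, pl i j a b c d k m * pl i j a' b' c' d' m l =
        pl i j a b c d k k * pl i j a' b' c' d' k l := by
      refine Finset.sum_eq_single k ?_ (by simp)
      intro m _ hm
      have : pl i j a b c d k m = 0 := by simp [pl, hk.1, hk.2, hm]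
      simp [this]
    rw [hsum]
    simp [pl, hk.1, hk.2]

lemma pl_transpose (i j : Fin μ) (a b c d : ℂ) :
    (pl i j a b c d)ᵀ = pl i j a c b d := by
  ext k l
  simp only [Matrix.transpose_apply, pl]
  split_ifs <;> (try grind) <;> rfl

lemma pl_one {i j : Fin μ} (hij : i ≠ j) : pl i j 1 0 0 1 = 1 := by
  ext k l
  simp only [pl, Matrix.one_apply]
  split_ifs <;> (try grind) <;> rfl

lemma pl_diagonal {i j : Fin μ} (hij : i ≠ j) (x y : ℂ) :
    pl i j x 0 0 y = Matrix.diagonal (fun k => if k = i then x else if k = j then y else 1) := by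
  ext k l
  simp only [pl, Matrix.diagonal_apply]
  split_ifs <;> (try grind) <;> rfl

lemma pl_transvection {i j : Fin μ} (hij : i ≠ j) (c : ℂ) :
    Matrix.transvection i j c = pl i j 1 c 0 1 := by
  ext k l
  simp only [Matrix.transvection, Matrix.add_apply, Matrix.one_apply, pl,
    Matrix.single_apply]
  split_ifs <;> (try grind) <;> (intros; simp_all)

/-- The GL element with value `pl i j a b c d`, given an explicit 2×2 inverse. -/
def plGL {i j : Fin μ} (hij : i ≠ j) (a b c d a' b' c' d' : ℂ)
    (h1 : a*a'+b*c' = 1) (h2 : a*b'+b*d' = 0) (h3 : c*a'+d*c' = 0) (h4 : c*b'+d*d' = 1)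
    (h1' : a'*a+b'*c = 1) (h2' : a'*b+b'*d = 0) (h3' : c'*a+d'*c = 0) (h4' : c'*b+d'*d = 1) :
    GL (Fin μ) ℂ :=
  ⟨pl i j a b c d, pl i j a' b' c' d',
    by rw [pl_mul hij, h1, h2, h3, h4, pl_one hij],
    by rw [pl_mul hij, h1', h2', h3', h4', pl_one hij]⟩

lemma pl_congr {i j : Fin μ} {a b c d a' b' c' d' : ℂ}
    (h1 : a = a') (h2 : b = b') (h3 : c = c') (h4 : d = d') :
    pl i j a b c d = pl i j a' b' c' d' := by
  subst h1; subst h2; subst h3; subst h4; rfl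

end Stmt2Aux

open Stmt2Aux

/-- The subgroup of `GL(μ,ℂ)` generated by the invertible diagonal matrices
(the group `(ℝ⁺ × U(1))^μ`) and the complex special orthogonal group `SO(μ,ℂ)` is all of
`GL(μ,ℂ)`. -/
theorem stmt2 (μ : ℕ) :
    Subgroup.closure
        ({ A : GL (Fin μ) ℂ | ∃ d : Fin μ → ℂ, (∀ i, d i ≠ 0) ∧
            (A : Matrix (Fin μ) (Fin μ) ℂ) = Matrix.diagonal d }
          ∪ { A : GL (Fin μ) ℂ |
              (A : Matrix (Fin μ) (Fin μ) ℂ)ᵀ * (A : Matrix (Fin μ) (Fin μ) ℂ) = 1 ∧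
              (A : Matrix (Fin μ) (Fin μ) ℂ).det = 1 })
      = (⊤ : Subgroup (GL (Fin μ) ℂ)) := by
  set S := ({ A : GL (Fin μ) ℂ | ∃ d : Fin μ → ℂ, (∀ i, d i ≠ 0) ∧
            (A : Matrix (Fin μ) (Fin μ) ℂ) = Matrix.diagonal d }
          ∪ { A : GL (Fin μ) ℂ |
              (A : Matrix (Fin μ) (Fin μ) ℂ)ᵀ * (A : Matrix (Fin μ) (Fin μ) ℂ) = 1 ∧
              (A : Matrix (Fin μ) (Fin μ) ℂ).det = 1 }) with hS
  set H := Subgroup.closure S with hH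
  -- diagonal matrices are in H
  have diag_mem : ∀ (g : GL (Fin μ) ℂ) (d : Fin μ → ℂ),
      (g : Matrix (Fin μ) (Fin μ) ℂ) = Matrix.diagonal d → g ∈ H := by
    intro g d hg
    have hdet : IsUnit (Matrix.diagonal d).det := by
      rw [← hg]
      exact (Matrix.isUnit_iff_isUnit_det _).mp ⟨g, rfl⟩
    have hd : ∀ i, d i ≠ 0 := by
      intro i
      rw [Matrix.det_diagonal] at hdet
      have := hdet.ne_zero
      intro h0
      exact this (Finset.prod_eq_zero (Finset.mem_univ i) h0)
    exact Subgroup.subset_closure (Or.inl ⟨d, hd, hg⟩)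
  -- orthogonal matrices (any det) are in H
  have orth_mem : ∀ (g : GL (Fin μ) ℂ),
      (g : Matrix (Fin μ) (Fin μ) ℂ)ᵀ * (g : Matrix (Fin μ) (Fin μ) ℂ) = 1 → g ∈ H := by
    intro g hg
    have hdet2 : (g : Matrix (Fin μ) (Fin μ) ℂ).det * (g : Matrix (Fin μ) (Fin μ) ℂ).det = 1 := by
      have := congrArg Matrix.det hg
      rwa [Matrix.det_mul, Matrix.det_transpose, Matrix.det_one] at this
    rcases mul_self_eq_one_iff.mp hdet2 with h1 | hm1
    · exact Subgroup.subset_closure (Or.inr ⟨hg, h1⟩)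
    · -- det = -1 : multiply by a diagonal sign flip
      have hμ : 0 < μ := by
        by_contra h
        push_neg at h
        interval_cases μ
        · have : (g : Matrix (Fin 0) (Fin 0) ℂ).det = 1 := Matrix.det_fin_zero
          rw [this] at hm1
          norm_num at hm1
      set i0 : Fin μ := ⟨0, hμ⟩
      set d : Fin μ → ℂ := fun k => if k = i0 then -1 else 1 with hd
      have hd0 : ∀ k, d k ≠ 0 := by intro k; simp only [hd]; split_ifs <;> norm_num
      set D : GL (Fin μ) ℂ :=
        ⟨Matrix.diagonal d, Matrix.diagonal d,
          by rw [Matrix.diagonal_mul_diagonal]; convert Matrix.diagonal_one using 2;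
             funext k; simp only [hd]; split_ifs <;> ring,
          by rw [Matrix.diagonal_mul_diagonal]; convert Matrix.diagonal_one using 2;
             funext k; simp only [hd]; split_ifs <;> ring⟩ with hD
      have hDmem : D ∈ H := diag_mem D d rfl
      have hgD : g * D ∈ H := by
        refine Subgroup.subset_closure (Or.inr ⟨?_, ?_⟩)
        · have hval : ((g * D : GL (Fin μ) ℂ) : Matrix (Fin μ) (Fin μ) ℂ)
              = (g : Matrix (Fin μ) (Fin μ) ℂ) * Matrix.diagonal d := rfl
          rw [hval, Matrix.transpose_mul, Matrix.diagonal_transpose]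
          calc Matrix.diagonal d * (g : Matrix (Fin μ) (Fin μ) ℂ)ᵀ *
                ((g : Matrix (Fin μ) (Fin μ) ℂ) * Matrix.diagonal d)
              = Matrix.diagonal d * ((g : Matrix (Fin μ) (Fin μ) ℂ)ᵀ *
                (g : Matrix (Fin μ) (Fin μ) ℂ)) * Matrix.diagonal d := by
                  noncomm_ring
            _ = Matrix.diagonal d * Matrix.diagonal d := by rw [hg]; noncomm_ring
            _ = 1 := by
                  rw [Matrix.diagonal_mul_diagonal]
                  convert Matrix.diagonal_one using 2
                  funext k; simp only [hd]; split_ifs <;> ring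
        · have hval : ((g * D : GL (Fin μ) ℂ) : Matrix (Fin μ) (Fin μ) ℂ)
              = (g : Matrix (Fin μ) (Fin μ) ℂ) * Matrix.diagonal d := rfl
          rw [hval, Matrix.det_mul, hm1, Matrix.det_diagonal]
          have : ∏ k, d k = -1 := by
            simp only [hd]
            rw [Finset.prod_ite_eq' Finset.univ i0 (fun _ => (-1 : ℂ))]
            simp
          rw [this]; ring
      have : g = (g * D) * D⁻¹ := by group
      rw [this]
      exact mul_mem hgD (inv_mem hDmem)
  -- rotations are in H
  have rot_mem : ∀ (i j : Fin μ) (hij : i ≠ j) (a b : ℂ) (hab : a*a + b*b = 1),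
      (plGL hij a b (-b) a a (-b) b a
        (by linear_combination hab) (by ring) (by ring) (by linear_combination hab)
        (by linear_combination hab) (by ring) (by ring) (by linear_combination hab)) ∈ H := by
    intro i j hij a b hab
    apply orth_mem
    show (pl i j a b (-b) a)ᵀ * (pl i j a b (-b) a) = 1
    rw [pl_transpose, pl_mul hij]
    rw [show a*a + (-b)*(-b) = 1 by linear_combination hab,
        show a*b + (-b)*a = 0 by ring,
        show b*a + a*(-b) = 0 by ring,
        show b*b + a*a = 1 by linear_combination hab]
    exact pl_one hij
  -- any transvection matrix is in H (explicit complex SVD with the golden ratio)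
  have trans_mem : ∀ (i j : Fin μ) (hij : i ≠ j) (c : ℂ) (hc : c ≠ 0),
      ∀ (g : GL (Fin μ) ℂ),
      (g : Matrix (Fin μ) (Fin μ) ℂ) = pl i j 1 c 0 1 → g ∈ H := by
    intro i j hij c hc g hg
    have hcinv : c * c⁻¹ = 1 := mul_inv_cancel₀ hc
    have hcinv' : c⁻¹ * c = 1 := inv_mul_cancel₀ hc
    set x : ℝ := (1 + Real.sqrt 5) / 2 with hx
    have h5 : Real.sqrt 5 ^ 2 = 5 := Real.sq_sqrt (by norm_num)
    have hs5 : Real.sqrt 5 > 0 := Real.sqrt_pos.mpr (by norm_num)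
    set φ : ℂ := (x : ℂ) with hφdef
    have hφ : φ ^ 2 = φ + 1 := by
      rw [hφdef, show ((x:ℝ):ℂ) ^ 2 = ((x ^ 2 : ℝ) : ℂ) by push_cast; ring,
        show ((x:ℝ):ℂ) + 1 = ((x + 1 : ℝ) : ℂ) by push_cast; ring, Complex.ofReal_inj, hx]
      nlinarith [h5]
    have hφ0 : φ ≠ 0 := by
      rw [hφdef]
      exact_mod_cast Complex.ofReal_ne_zero.mpr (by rw [hx]; positivity)
    have hφ2 : φ + 2 ≠ 0 := by
      rw [hφdef, show ((x:ℝ):ℂ) + 2 = ((x + 2 : ℝ) : ℂ) by push_cast; ring]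
      exact Complex.ofReal_ne_zero.mpr (by rw [hx]; positivity)
    obtain ⟨b, hb2⟩ := IsAlgClosed.exists_pow_nat_eq (k := ℂ) (φ + 2)⁻¹ (n := 2) (by norm_num)
    have hb : b ^ 2 * (φ + 2) = 1 := by rw [hb2]; field_simp
    have hφψ : φ * (φ - 1) = 1 := by linear_combination hφ
    have hψφ : (φ - 1) * φ = 1 := by linear_combination hφ
    -- the five factors
    set r1 : GL (Fin μ) ℂ := plGL hij (φ*b) (-b) (-(-b)) (φ*b) (φ*b) (-(-b)) (-b) (φ*b)
        (by linear_combination b^2*hφ + hb) (by ring) (by ring)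
        (by linear_combination b^2*hφ + hb)
        (by linear_combination b^2*hφ + hb) (by ring) (by ring)
        (by linear_combination b^2*hφ + hb) with hr1
    set r2 : GL (Fin μ) ℂ := plGL hij b (φ*b) (-(φ*b)) b b (-(φ*b)) (φ*b) b
        (by linear_combination b^2*hφ + hb) (by ring) (by ring)
        (by linear_combination b^2*hφ + hb)
        (by linear_combination b^2*hφ + hb) (by ring) (by ring)
        (by linear_combination b^2*hφ + hb) with hr2
    set dD : GL (Fin μ) ℂ := plGL hij φ 0 0 (φ - 1) (φ - 1) 0 0 φ
        (by linear_combination hφ) (by ring) (by ring) (by linear_combination hφ)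
        (by linear_combination hφ) (by ring) (by ring) (by linear_combination hφ) with hdD
    set dC : GL (Fin μ) ℂ := plGL hij c 0 0 1 c⁻¹ 0 0 1
        (by linear_combination hcinv) (by ring) (by ring) (by ring)
        (by linear_combination hcinv') (by ring) (by ring) (by ring) with hdC
    -- memberships
    have hr1m : r1 ∈ H := by
      rw [hr1]
      apply orth_mem
      show (pl i j (φ*b) (-b) (-(-b)) (φ*b))ᵀ * (pl i j (φ*b) (-b) (-(-b)) (φ*b)) = 1
      rw [pl_transpose, pl_mul hij,
        show (φ*b)*(φ*b) + (-(-b))*(-(-b)) = 1 by linear_combination b^2*hφ + hb,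
        show (φ*b)*(-b) + (-(-b))*(φ*b) = 0 by ring,
        show (-b)*(φ*b) + (φ*b)*(-(-b)) = 0 by ring,
        show (-b)*(-b) + (φ*b)*(φ*b) = 1 by linear_combination b^2*hφ + hb]
      exact pl_one hij
    have hr2m : r2 ∈ H := by
      rw [hr2]
      apply orth_mem
      show (pl i j b (φ*b) (-(φ*b)) b)ᵀ * (pl i j b (φ*b) (-(φ*b)) b) = 1
      rw [pl_transpose, pl_mul hij,
        show b*b + (-(φ*b))*(-(φ*b)) = 1 by linear_combination b^2*hφ + hb,
        show b*(φ*b) + (-(φ*b))*b = 0 by ring,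
        show (φ*b)*b + b*(-(φ*b)) = 0 by ring,
        show (φ*b)*(φ*b) + b*b = 1 by linear_combination b^2*hφ + hb]
      exact pl_one hij
    have hdDm : dD ∈ H := by
      refine diag_mem dD (fun k => if k = i then φ else if k = j then φ - 1 else 1) ?_
      show pl i j φ 0 0 (φ - 1) = _
      exact pl_diagonal hij _ _
    have hdCm : dC ∈ H := by
      refine diag_mem dC (fun k => if k = i then c else if k = j then 1 else 1) ?_
      show pl i j c 0 0 1 = _
      exact pl_diagonal hij _ _
    -- the product equals the transvection
    have hval : ((dC * r1 * dD * r2 * dC⁻¹ : GL (Fin μ) ℂ) : Matrix (Fin μ) (Fin μ) ℂ)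
        = pl i j 1 c 0 1 := by
      show pl i j c 0 0 1 * pl i j (φ*b) (-b) (-(-b)) (φ*b) * pl i j φ 0 0 (φ - 1) *
          pl i j b (φ*b) (-(φ*b)) b * pl i j c⁻¹ 0 0 1 = pl i j 1 c 0 1
      rw [pl_mul hij, pl_mul hij, pl_mul hij, pl_mul hij]
      refine pl_congr ?_ ?_ ?_ ?_
      · linear_combination (φ*b^2*(2*φ-1)) * hcinv + 2*b^2 * hφ + hb
      · linear_combination c*b^2*(φ+1) * hφ + c * hb
      · linear_combination (-(c⁻¹*φ*b^2)) * hφ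
      · linear_combination 2*b^2 * hφ + hb
    have hgeq : g = dC * r1 * dD * r2 * dC⁻¹ := Units.ext (hg.trans hval.symm)
    rw [hgeq]
    exact mul_mem (mul_mem (mul_mem (mul_mem hdCm hr1m) hdDm) hr2m) (inv_mem hdCm)
  -- main induction
  rw [eq_top_iff]
  rintro g -
  refine Matrix.diagonal_transvection_induction
    (fun M => ∀ h : GL (Fin μ) ℂ, (h : Matrix (Fin μ) (Fin μ) ℂ) = M → h ∈ H)
    (g : Matrix (Fin μ) (Fin μ) ℂ) ?_ ?_ ?_ g rfl
  · intro D _ h hh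
    exact diag_mem h D hh
  · rintro ⟨i, j, hij, c⟩ h hh
    have hh' : (h : Matrix (Fin μ) (Fin μ) ℂ) = pl i j 1 c 0 1 := by
      rw [hh]
      show Matrix.transvection i j c = _
      exact pl_transvection hij c
    by_cases hc : c = 0
    · subst hc
      have : h = 1 := Units.ext (by rw [hh']; exact pl_one hij)
      rw [this]; exact one_mem H
    · exact trans_mem i j hij c hc h hh'
  · intro A B hA hB h hh
    have hAB : IsUnit (A * B) := ⟨h, hh⟩
    have hdet : IsUnit (A.det * B.det) := by
      rw [← Matrix.det_mul]
      exact (Matrix.isUnit_iff_isUnit_det _).mp hAB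
    have hAu : IsUnit A := (Matrix.isUnit_iff_isUnit_det _).mpr (isUnit_of_mul_isUnit_left hdet)
    have hBu : IsUnit B := (Matrix.isUnit_iff_isUnit_det _).mpr
      (isUnit_of_mul_isUnit_right hdet)
    obtain ⟨uA, huA⟩ := hAu
    obtain ⟨uB, huB⟩ := hBu
    have : h = uA * uB := Units.ext (by rw [Units.val_mul, huA, huB]; exact hh)
    rw [this]
    exact mul_mem (hA uA huA) (hB uB huB)
end

section
/- Every complex nonzero vector v ∈ ℂ^m with v·v = 0 (sum of squares of components, no conjugation) can be mapped by a real orthogonal transformation R ∈ O(m) and a positive scalar to the vector e₁ + i·e₂; equivalently, there exists R ∈ O(m) and λ > 0 with R v = λ(e₁ + i e₂). -/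
open Matrix

/-- a nonzero isotropic vector `v ∈ ℂ^m` (for the bilinear dot product,
no conjugation) can be mapped by a real orthogonal matrix `R ∈ O(m)` and a positive
scaling to `e₁ + i e₂`. -/
theorem stmt4 (m : ℕ) (hm : 2 ≤ m) (v : Fin m → ℂ) (hv0 : v ≠ 0)
    (hnull : ∑ j, v j * v j = 0) :
    ∃ R : Matrix (Fin m) (Fin m) ℝ, Rᵀ * R = 1 ∧ ∃ lam : ℝ, 0 < lam ∧
      (R.map Complex.ofReal).mulVec v = fun i : Fin m =>
        (lam : ℂ) * ((if (i : ℕ) = 0 then 1 else 0) +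
          Complex.I * (if (i : ℕ) = 1 then 1 else 0)) := by
  classical
  set α : EuclideanSpace ℝ (Fin m) := WithLp.toLp 2 (fun j => (v j).re) with hα
  set β : EuclideanSpace ℝ (Fin m) := WithLp.toLp 2 (fun j => (v j).im) with hβ
  have hre : ∑ j, (α j * α j - β j * β j) = 0 := by
    have h := congrArg Complex.re hnull
    rw [Complex.re_sum] at h
    simpa [Complex.mul_re, hα, hβ] using h
  have him : ∑ j, α j * β j = 0 := by
    have h := congrArg Complex.im hnull
    rw [Complex.im_sum] at h
    simp only [Complex.mul_im, Complex.zero_im] at h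
    have h2 : (2:ℝ) * ∑ j, α j * β j = 0 := by
      rw [Finset.mul_sum, ← h]
      exact Finset.sum_congr rfl (fun j _ => by simp [hα, hβ]; ring)
    linarith
  have hsum : ∑ j, α j * α j = ∑ j, β j * β j := by
    have := Finset.sum_sub_distrib (f := fun j => α j * α j) (g := fun j => β j * β j)
      (s := Finset.univ)
    rw [this] at hre
    linarith
  have hαne : α ≠ 0 := by
    intro h
    apply hv0
    funext j
    have hz : ∀ k, α k = 0 := fun k => by simp [h]
    have hb : ∑ k, β k * β k = 0 := by rw [← hsum]; simp [hz]
    have hbj : β j * β j = 0 :=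
      (Finset.sum_eq_zero_iff_of_nonneg (fun k _ => mul_self_nonneg (β k))).mp hb j
        (Finset.mem_univ j)
    have hbj' : β j = 0 := by nlinarith [hbj]
    have haj : α j = 0 := hz j
    simp [Complex.ext_iff]
    exact ⟨by simpa [hα] using haj, by simpa [hβ] using hbj'⟩
  have hlamsq : 0 < ∑ j, α j * α j := by
    have hne : ∃ j, α j ≠ 0 := by
      by_contra h
      push_neg at h
      exact hαne (PiLp.ext h)
    obtain ⟨j, hj⟩ := hne
    exact Finset.sum_pos' (fun k _ => mul_self_nonneg _)
      ⟨j, Finset.mem_univ j, mul_self_pos.mpr hj⟩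
  set lam : ℝ := Real.sqrt (∑ j, α j * α j) with hlam
  have hlampos : 0 < lam := Real.sqrt_pos.mpr hlamsq
  have hlamne : lam ≠ 0 := ne_of_gt hlampos
  have hlamsq' : lam * lam = ∑ j, α j * α j := Real.mul_self_sqrt hlamsq.le
  set a' : EuclideanSpace ℝ (Fin m) := lam⁻¹ • α with ha'
  set b' : EuclideanSpace ℝ (Fin m) := lam⁻¹ • β with hb'
  set i0 : Fin m := ⟨0, by omega⟩ with hi0
  set i1 : Fin m := ⟨1, by omega⟩ with hi1
  have hi01 : i0 ≠ i1 := by simp [hi0, hi1, Fin.ext_iff]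
  -- inner products
  have iaa : (inner ℝ a' a' : ℝ) = 1 := by
    rw [ha', real_inner_smul_left, real_inner_smul_right, PiLp.inner_apply]
    simp only [RCLike.inner_apply, conj_trivial]
    rw [← hlamsq']
    field_simp
  have ibb : (inner ℝ b' b' : ℝ) = 1 := by
    rw [hb', real_inner_smul_left, real_inner_smul_right, PiLp.inner_apply]
    simp only [RCLike.inner_apply, conj_trivial]
    rw [← hsum, ← hlamsq']
    field_simp
  have iab : (inner ℝ a' b' : ℝ) = 0 := by
    rw [ha', hb', real_inner_smul_left, real_inner_smul_right, PiLp.inner_apply]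
    simp only [RCLike.inner_apply, conj_trivial]
    rw [Finset.sum_congr rfl fun j _ => mul_comm (β j) (α j), him]
    ring
  have iba : (inner ℝ b' a' : ℝ) = 0 := by rw [real_inner_comm]; exact iab
  set s : Set (Fin m) := {i0, i1} with hs
  set w : Fin m → EuclideanSpace ℝ (Fin m) := fun i => if i = i0 then a' else b' with hw
  have hw0 : w i0 = a' := by simp [hw]
  have hw1 : w i1 = b' := by simp [hw, hi01.symm]
  have hon : Orthonormal ℝ (s.restrict w) := by
    rw [orthonormal_iff_ite]
    rintro ⟨i, hi⟩ ⟨j, hj⟩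
    simp only [Set.restrict_apply, Subtype.mk.injEq]
    rcases hi with hi | hi <;> rcases hj with hj | hj <;>
      subst hi <;> subst hj <;>
      simp [Set.restrict, hw0, hw1, hi01, hi01.symm, iaa, ibb, iab, iba,
          (show ‖a'‖ = 1 by rw [norm_eq_sqrt_real_inner, iaa, Real.sqrt_one]),
          (show ‖b'‖ = 1 by rw [norm_eq_sqrt_real_inner, ibb, Real.sqrt_one])]
  have hcard : Module.finrank ℝ (EuclideanSpace ℝ (Fin m)) = Fintype.card (Fin m) := by
    simp [finrank_euclideanSpace]
  obtain ⟨b, hb⟩ := hon.exists_orthonormalBasis_extension_of_card_eq hcard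
  have hb0 : b i0 = a' := by rw [hb i0 (by simp [hs]), hw0]
  have hb1 : b i1 = b' := by rw [hb i1 (by simp [hs]), hw1]
  set R : Matrix (Fin m) (Fin m) ℝ := Matrix.of (fun i j => b i j) with hR
  have hbij : ∀ i k : Fin m, ∑ j, b i j * b k j = if i = k then 1 else 0 := by
    intro i k
    have h := (orthonormal_iff_ite.mp b.orthonormal) i k
    rw [PiLp.inner_apply] at h
    simpa [RCLike.inner_apply, conj_trivial, mul_comm] using h
  have hRRT : R * Rᵀ = 1 := by
    ext i k
    rw [Matrix.mul_apply]
    simp only [Matrix.transpose_apply, hR, Matrix.of_apply, Matrix.one_apply]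
    exact hbij i k
  refine ⟨R, mul_eq_one_comm.mp hRRT, lam, hlampos, ?_⟩
  -- key inner product computations
  have key : ∀ (i : Fin m) (k : Fin m) (x : EuclideanSpace ℝ (Fin m)),
      b k = lam⁻¹ • x → ∑ j, b i j * x j = lam * (if i = k then 1 else 0) := by
    intro i k x hx
    have h := hbij i k
    rw [hx] at h
    have h2 : ∑ j, b i j * (lam⁻¹ * x j) = if i = k then 1 else 0 := by
      simpa using h
    have h3 : lam⁻¹ * ∑ j, b i j * x j = if i = k then 1 else 0 := by
      rw [Finset.mul_sum, ← h2]
      exact Finset.sum_congr rfl (fun j _ => by ring)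
    field_simp at h3
    rw [h3]
  have key1 : ∀ i, ∑ j, b i j * α j = lam * (if i = i0 then 1 else 0) :=
    fun i => key i i0 α (by rw [hb0, ha'])
  have key2 : ∀ i, ∑ j, b i j * β j = lam * (if i = i1 then 1 else 0) :=
    fun i => key i i1 β (by rw [hb1, hb'])
  funext i
  have hvj : ∀ j, v j = (α j : ℂ) + (β j : ℂ) * Complex.I := by
    intro j
    rw [hα, hβ]
    exact (Complex.re_add_im (v j)).symm
  have hmv : (R.map Complex.ofReal).mulVec v i
      = ((∑ j, b i j * α j : ℝ) : ℂ) + ((∑ j, b i j * β j : ℝ) : ℂ) * Complex.I := by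
    rw [Matrix.mulVec, dotProduct]
    push_cast
    rw [Finset.sum_mul, ← Finset.sum_add_distrib]
    apply Finset.sum_congr rfl
    intro j _
    rw [hvj j]
    simp [hR]
    ring
  rw [hmv, key1 i, key2 i]
  simp only [hi0, hi1, Fin.ext_iff, Fin.val_mk]
  push_cast [apply_ite Complex.ofReal]
  split_ifs <;> ring
end

section
/- Let v₁,…,v_μ ∈ ℂ^m be linearly independent vectors with v_i · v_j = 0 for all i,j (isotropic under the bilinear dot product). Then 2μ ≤ m and there exists R ∈ O(m) such that each R v_i lies in the complex span of {e_{2j-1} + i e_{2j} : 1 ≤ j ≤ i}, with the coefficient of e_{2i-1} + i e_{2i} in R v_i nonzero. -/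
open Matrix
open InnerProductSpace

instance stmt5_wf (μ : ℕ) [NeZero μ] : WellFoundedLT (Fin μ) := inferInstance

/-- a family of `μ` linearly independent, mutually isotropic/orthogonal
vectors of `ℂ^m` (for the bilinear dot product) forces `2μ ≤ m` and can be brought by a
real orthogonal matrix into upper-triangular form with respect to the null basis
`e_{2j-1} + i e_{2j}`, with nonzero diagonal coefficients. -/
theorem stmt5 (m μ : ℕ) (v : Fin μ → Fin m → ℂ)
    (hli : LinearIndependent ℂ v)
    (hnull : ∀ i j, ∑ k, v i k * v j k = 0) :
    2 * μ ≤ m ∧ ∃ R : Matrix (Fin m) (Fin m) ℝ, Rᵀ * R = 1 ∧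
      ∀ i : Fin μ, ∃ c : Fin μ → ℂ, c i ≠ 0 ∧ (∀ j, i < j → c j = 0) ∧
        (R.map Complex.ofReal).mulVec (v i) =
          ∑ j : Fin μ, c j • (fun k : Fin m =>
            (if (k : ℕ) = 2 * (j : ℕ) then (1 : ℂ) else 0) +
              Complex.I * (if (k : ℕ) = 2 * (j : ℕ) + 1 then 1 else 0)) := by
  classical
  open Submodule in
  rcases Nat.eq_zero_or_pos μ with rfl | hμ
  · exact ⟨by omega, 1, by simp, fun i => i.elim0⟩
  haveI : NeZero μ := ⟨hμ.ne'⟩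
  let v' : Fin μ → EuclideanSpace ℂ (Fin m) := fun i => WithLp.toLp 2 (v i)
  have hli' : LinearIndependent ℂ v' := hli.map' (WithLp.linearEquiv 2 ℂ (Fin m → ℂ)).symm.toLinearMap (by simp)
  set w : Fin μ → EuclideanSpace ℂ (Fin m) := gramSchmidtNormed ℂ v' with hw
  have hon : Orthonormal ℂ w := gramSchmidtNormed_orthonormal hli'
  have hmem : ∀ i, w i ∈ span ℂ (Set.range v') := by
    intro i
    have h1 : w i ∈ span ℂ (Set.range w) := subset_span ⟨i, rfl⟩
    rwa [hw, span_gramSchmidtNormed_range, span_gramSchmidt] at h1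
  -- the bilinear form vanishes on the span of the `v`'s
  have hspan : ∀ x : EuclideanSpace ℂ (Fin m), x ∈ span ℂ (Set.range v') →
      ∀ y : EuclideanSpace ℂ (Fin m), y ∈ span ℂ (Set.range v') → ∑ k, x k * y k = 0 := by
    intro x hx
    induction hx using Submodule.span_induction with
    | mem a ha =>
      obtain ⟨i, rfl⟩ := ha
      intro y hy
      induction hy using Submodule.span_induction with
      | mem b hb => obtain ⟨j, rfl⟩ := hb; exact hnull i j
      | zero => simp
      | add y z _ _ hy hz => simp [mul_add, Finset.sum_add_distrib, hy, hz]
      | smul a y _ hy => simp only [PiLp.smul_apply, smul_eq_mul, mul_left_comm,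
          ← Finset.mul_sum, hy, mul_zero]
    | zero => intro y hy; simp
    | add x z _ _ hx hz => intro y hy; simp [add_mul, Finset.sum_add_distrib, hx y hy, hz y hy]
    | smul a x _ hx => intro y hy; simp only [PiLp.smul_apply, smul_eq_mul, mul_assoc,
        ← Finset.mul_sum, hx y hy, mul_zero]
  have hwnull : ∀ i j, ∑ k, w i k * w j k = 0 := fun i j => hspan _ (hmem i) _ (hmem j)
  -- real and imaginary parts
  let X : Fin μ → EuclideanSpace ℝ (Fin m) := fun i => WithLp.toLp 2 (fun k => (w i k).re)
  let Y : Fin μ → EuclideanSpace ℝ (Fin m) := fun i => WithLp.toLp 2 (fun k => (w i k).im)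
  have key : ∀ i j, (∑ k, X i k * X j k = (if i = j then 2⁻¹ else 0)) ∧
      (∑ k, Y i k * Y j k = (if i = j then 2⁻¹ else 0)) ∧
      (∑ k, X i k * Y j k = 0) ∧ (∑ k, Y i k * X j k = 0) := by
    intro i j
    have hb := hwnull i j
    have hh := orthonormal_iff_ite.mp hon i j
    rw [PiLp.inner_apply] at hh
    simp only [RCLike.inner_apply] at hh
    have hbre : ∑ k, (X i k * X j k - Y i k * Y j k) = 0 := by
      have := congrArg Complex.re hb
      simpa [X, Y, Complex.re_sum, Complex.mul_re] using this
    have hbim : ∑ k, (X i k * Y j k + Y i k * X j k) = 0 := by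
      have := congrArg Complex.im hb
      simpa [X, Y, Complex.im_sum, Complex.mul_im] using this
    have hhre : ∑ k, (X i k * X j k + Y i k * Y j k) = (if i = j then 1 else 0) := by
      have := congrArg Complex.re hh
      simp [X, Y, Complex.re_sum, Complex.mul_re, apply_ite Complex.re] at this
      refine (Finset.sum_congr rfl fun k _ => ?_).trans this
      simp only [X, Y, WithLp.ofLp_toLp]; ring
    have hhim : ∑ k, (X i k * Y j k - Y i k * X j k) = 0 := by
      have := congrArg Complex.im hh
      simp [X, Y, Complex.im_sum, Complex.mul_im, apply_ite Complex.im] at this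
      refine (Finset.sum_congr rfl fun k _ => ?_).trans this
      simp only [X, Y, WithLp.ofLp_toLp]; ring
    rw [Finset.sum_sub_distrib] at hbre hhim
    rw [Finset.sum_add_distrib] at hbim hhre
    rcases eq_or_ne i j with rfl | hij
    · simp only [if_pos rfl, eq_self_iff_true, if_true] at hhre ⊢
      exact ⟨by linarith, by linarith, by linarith, by linarith⟩
    · simp only [if_neg hij] at hhre ⊢
      exact ⟨by linarith, by linarith, by linarith, by linarith⟩
  -- the rescaled real/imaginary parts form an orthonormal family of 2μ vectors
  let G : Fin μ ⊕ Fin μ → EuclideanSpace ℝ (Fin m) :=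
    Sum.elim (fun a => (Real.sqrt 2) • X a) (fun a => (Real.sqrt 2) • Y a)
  have h2 : (Real.sqrt 2) * (Real.sqrt 2) = 2 := Real.mul_self_sqrt (by norm_num)
  have hG : Orthonormal ℝ G := by
    rw [orthonormal_iff_ite]
    rintro (a | a) (b | b) <;>
      [skip; skip; skip; skip] <;>
      (rw [PiLp.inner_apply]
       simp only [G, Sum.elim_inl, Sum.elim_inr, PiLp.smul_apply, smul_eq_mul,
         RCLike.inner_apply, conj_trivial, mul_mul_mul_comm, h2, ← Finset.mul_sum,
         (key _ _).1, (key _ _).2.1, (key _ _).2.2.1, (key _ _).2.2.2,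
         Sum.inl.injEq, Sum.inr.injEq, mul_zero, reduceCtorEq, if_false]) <;>
      try (rcases eq_or_ne a b with rfl | hab <;> simp_all)
    all_goals exact fun h => hab h.symm
  have h2m : 2 * μ ≤ m := by
    have := hG.linearIndependent.fintype_card_le_finrank
    simp only [Fintype.card_sum, Fintype.card_fin, finrank_euclideanSpace,
      Fintype.card_fin] at this
    omega
  refine ⟨h2m, ?_⟩
  -- embed the double index into `Fin m`
  have hι₂lt : ∀ p : Fin μ ⊕ Fin μ,
      (Sum.elim (fun a : Fin μ => 2*(a:ℕ)) (fun a : Fin μ => 2*(a:ℕ)+1) p) < m := by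
    rintro (a | a) <;> simp only [Sum.elim_inl, Sum.elim_inr] <;>
      (have := a.isLt; omega)
  let ι₂ : Fin μ ⊕ Fin μ → Fin m := fun p => ⟨_, hι₂lt p⟩
  have hinj : Function.Injective ι₂ := by
    rintro (a | a) (b | b) h <;> simp only [ι₂, Fin.mk.injEq, Sum.elim_inl, Sum.elim_inr] at h <;>
      simp only [Sum.inl.injEq, Sum.inr.injEq, Fin.ext_iff, reduceCtorEq] <;> omega
  let F : Fin m → EuclideanSpace ℝ (Fin m) := Function.extend ι₂ G fun _ => 0
  have hFval : ∀ p, F (ι₂ p) = G p := fun p => hinj.extend_apply G _ p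
  have hFon : Orthonormal ℝ (Set.restrict (Set.range ι₂) F) := by
    rw [orthonormal_iff_ite]
    rintro ⟨_, p, rfl⟩ ⟨_, q, rfl⟩
    show inner ℝ (F (ι₂ p)) (F (ι₂ q)) = _
    rw [hFval, hFval, orthonormal_iff_ite.mp hG p q]
    refine if_congr ⟨fun h => h ▸ rfl, fun h => hinj (congrArg Subtype.val h)⟩ rfl rfl
  obtain ⟨b, hb⟩ := hFon.exists_orthonormalBasis_extension_of_card_eq
    (by simp [finrank_euclideanSpace])
  have hbval : ∀ p, b (ι₂ p) = G p := fun p => (hb _ ⟨p, rfl⟩).trans (hFval p)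
  -- the orthogonal matrix
  let R : Matrix (Fin m) (Fin m) ℝ := Matrix.of fun k l => b k l
  have hinner : ∀ k l : Fin m, ∑ n, R k n * R l n = if k = l then 1 else 0 := by
    intro k l
    have := orthonormal_iff_ite.mp b.orthonormal k l
    rw [PiLp.inner_apply] at this
    simpa [R, RCLike.inner_apply, conj_trivial, mul_comm] using this
  have hRO : R * Rᵀ = 1 := by
    ext k l
    simp only [Matrix.mul_apply, Matrix.transpose_apply, Matrix.one_apply]
    exact hinner k l
  refine ⟨R, mul_eq_one_comm.mp hRO, ?_⟩
  -- action of R on the orthonormal vectors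
  have hRb : ∀ p : Fin μ ⊕ Fin μ, ∀ k, R.mulVec (fun n => G p n) k
      = if k = ι₂ p then 1 else 0 := by
    intro p k
    have h1 : R.mulVec (fun n => G p n) k = ∑ n, R k n * G p n := rfl
    have h2' : ∀ n, G p n = R (ι₂ p) n := fun n => by
      show G p n = b (ι₂ p) n
      rw [hbval]
    rw [h1]
    simp only [h2']
    exact hinner k (ι₂ p)
  have hRX : ∀ (j : Fin μ) (k : Fin m), ∑ n, R k n * X j n
      = (Real.sqrt 2)⁻¹ * (if (k : ℕ) = 2 * (j : ℕ) then 1 else 0) := by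
    intro j k
    have h0 := hRb (Sum.inl j) k
    have h1 : R.mulVec (fun n => G (Sum.inl j) n) k = Real.sqrt 2 * ∑ n, R k n * X j n := by
      show ∑ n, R k n * G (Sum.inl j) n = _
      rw [Finset.mul_sum]
      refine Finset.sum_congr rfl fun n _ => ?_
      show R k n * (Real.sqrt 2 * X j n) = _
      ring
    rw [h1] at h0
    have hs : Real.sqrt 2 ≠ 0 := by positivity
    have hcond : (k = ι₂ (Sum.inl j)) ↔ ((k : ℕ) = 2 * (j : ℕ)) := by
      simp [ι₂, Fin.ext_iff]
    rw [if_congr hcond rfl rfl] at h0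
    field_simp
    linarith [h0]
  have hRY : ∀ (j : Fin μ) (k : Fin m), ∑ n, R k n * Y j n
      = (Real.sqrt 2)⁻¹ * (if (k : ℕ) = 2 * (j : ℕ) + 1 then 1 else 0) := by
    intro j k
    have h0 := hRb (Sum.inr j) k
    have h1 : R.mulVec (fun n => G (Sum.inr j) n) k = Real.sqrt 2 * ∑ n, R k n * Y j n := by
      show ∑ n, R k n * G (Sum.inr j) n = _
      rw [Finset.mul_sum]
      refine Finset.sum_congr rfl fun n _ => ?_
      show R k n * (Real.sqrt 2 * Y j n) = _
      ring
    rw [h1] at h0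
    have hs : Real.sqrt 2 ≠ 0 := by positivity
    have hcond : (k = ι₂ (Sum.inr j)) ↔ ((k : ℕ) = 2 * (j : ℕ) + 1) := by
      simp [ι₂, Fin.ext_iff]
    rw [if_congr hcond rfl rfl] at h0
    field_simp
    linarith [h0]
  -- final verification
  intro i
  have hv_mem : v' i ∈ span ℂ (w '' Set.Iic i) := by
    have h1 := mem_span_gramSchmidt ℂ v' (le_refl i)
    rwa [← span_gramSchmidtNormed v' (Set.Iic i)] at h1
  rw [Finsupp.mem_span_image_iff_linearCombination] at hv_mem
  obtain ⟨l, hlsupp, hlsum⟩ := hv_mem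
  rw [Finsupp.mem_supported] at hlsupp
  have hli0 : l i ≠ 0 := by
    intro h0
    have hsupp' : l ∈ Finsupp.supported ℂ ℂ (Set.Iio i) := by
      rw [Finsupp.mem_supported]
      intro j hj
      have hj1 : j ∈ Set.Iic i := hlsupp hj
      have hj2 : j ≠ i := by
        intro hji; rw [hji] at hj; exact (Finsupp.mem_support_iff.mp hj) h0
      exact lt_of_le_of_ne hj1 hj2
    have hmem' : v' i ∈ span ℂ (w '' Set.Iio i) :=
      (Finsupp.mem_span_image_iff_linearCombination ℂ).mpr ⟨l, hsupp', hlsum⟩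
    rw [hw, span_gramSchmidtNormed, span_gramSchmidt_Iio] at hmem'
    exact hli'.notMem_span_image (by simp) hmem'
  have hsqrtC : ((Real.sqrt 2 : ℝ) : ℂ) ≠ 0 := by
    rw [Complex.ofReal_ne_zero]; positivity
  refine ⟨fun j => l j * (((Real.sqrt 2 : ℝ) : ℂ))⁻¹, mul_ne_zero hli0 (inv_ne_zero hsqrtC),
    fun j hj => ?_, ?_⟩
  · show l j * (((Real.sqrt 2 : ℝ) : ℂ))⁻¹ = 0
    have : j ∉ l.support := fun hjs => absurd (hlsupp hjs) (not_le.mpr hj)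
    rw [Finsupp.notMem_support_iff.mp this, zero_mul]
  -- the sum decomposition
  rw [Finsupp.linearCombination_apply, Finsupp.sum_fintype _ _ (by simp)] at hlsum
  have hv_eq : v i = ∑ j : Fin μ, l j • (fun n => w j n : Fin m → ℂ) := by
    have : (∑ j : Fin μ, l j • w j : EuclideanSpace ℂ (Fin m)) = v' i := hlsum
    have h := congrArg WithLp.ofLp this.symm
    simpa [v'] using h
  funext k
  have hLHS : (R.map Complex.ofReal).mulVec (v i) k
      = ∑ j : Fin μ, l j * (∑ n, (R k n : ℂ) * w j n) := by
    rw [hv_eq]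
    show ∑ n, (R.map Complex.ofReal) k n * (∑ j : Fin μ, l j • (fun n => w j n : Fin m → ℂ)) n
      = _
    simp only [Finset.sum_apply, Pi.smul_apply, smul_eq_mul, Matrix.map_apply,
      Finset.mul_sum]
    conv_lhs => rw [Finset.sum_comm]
    exact Finset.sum_congr rfl fun j _ => Finset.sum_congr rfl fun n _ => by ring
  rw [hLHS]
  rw [Finset.sum_apply]
  refine Finset.sum_congr rfl fun j _ => ?_
  have hterm : ∑ n, (R k n : ℂ) * w j n
      = (((Real.sqrt 2 : ℝ) : ℂ))⁻¹ * ((if (k : ℕ) = 2 * (j : ℕ) then 1 else 0)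
          + Complex.I * (if (k : ℕ) = 2 * (j : ℕ) + 1 then 1 else 0)) := by
    have hsplit : ∀ n, (R k n : ℂ) * w j n
        = ((R k n * X j n : ℝ) : ℂ) + ((R k n * Y j n : ℝ) : ℂ) * Complex.I := by
      intro n
      have : w j n = ((X j n : ℝ) : ℂ) + ((Y j n : ℝ) : ℂ) * Complex.I :=
        (Complex.re_add_im (w j n)).symm
      rw [this]
      push_cast
      ring
    rw [Finset.sum_congr rfl fun n _ => hsplit n]
    rw [Finset.sum_add_distrib, ← Finset.sum_mul]
    rw [← Complex.ofReal_sum, ← Complex.ofReal_sum]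
    rw [hRX j k, hRY j k]
    push_cast
    simp only [apply_ite Complex.ofReal, Complex.ofReal_one, Complex.ofReal_zero,
      Complex.ofReal_inv]
    ring
  rw [hterm]
  simp only [Pi.smul_apply, smul_eq_mul]
  ring
end

section
/- If f : Ω → ℂ is holomorphic on an open domain Ω ⊆ ℂ with |f(z)| < 1 and f'(z) ≠ 0 on Ω, then the positive function N defined by N² = (1/4)·|f'(z)|²/(1-|f(z)|²)² satisfies Liouville's equation ∂_z ∂_{z̄} log N = 4 N². -/
/-- The Wirtinger derivative `∂_z = (∂_x - i ∂_y)/2`. -/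
noncomputable def wirtingerDz (f : ℂ → ℂ) (z : ℂ) : ℂ :=
  ((fderiv ℝ f z) 1 - Complex.I * (fderiv ℝ f z) Complex.I) / 2

/-- The Wirtinger derivative `∂_{z̄} = (∂_x + i ∂_y)/2`. -/
noncomputable def wirtingerDzbar (f : ℂ → ℂ) (z : ℂ) : ℂ :=
  ((fderiv ℝ f z) 1 + Complex.I * (fderiv ℝ f z) Complex.I) / 2

open Complex ComplexConjugate

lemma wdz_eq {g : ℂ → ℂ} {L : ℂ →L[ℝ] ℂ} {z : ℂ} (h : HasFDerivAt g L z) :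
    wirtingerDz g z = (L 1 - Complex.I * L Complex.I) / 2 := by
  rw [wirtingerDz, h.fderiv]

lemma wdzbar_eq {g : ℂ → ℂ} {L : ℂ →L[ℝ] ℂ} {z : ℂ} (h : HasFDerivAt g L z) :
    wirtingerDzbar g z = (L 1 + Complex.I * L Complex.I) / 2 := by
  rw [wirtingerDzbar, h.fderiv]

lemma hw_holo (g : ℂ → ℂ) (z : ℂ) (h : DifferentiableAt ℂ g z) :
    HasFDerivAt g (((1 : ℂ →L[ℂ] ℂ).smulRight (deriv g z)).restrictScalars ℝ) z :=
  (h.hasDerivAt.hasFDerivAt).restrictScalars ℝ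

lemma hw_conj {g : ℂ → ℂ} {L : ℂ →L[ℝ] ℂ} {z : ℂ} (h : HasFDerivAt g L z) :
    HasFDerivAt (fun u => conj (g u)) ((Complex.conjCLE.toContinuousLinearMap).comp L) z := by
  have := (Complex.conjCLE.hasFDerivAt (x := g z)).comp z h
  simpa [Function.comp_def] using this

lemma hw_log {g : ℂ → ℂ} {L : ℂ →L[ℝ] ℂ} {z : ℂ} (h : HasFDerivAt g L z)
    (hg : g z ∈ Complex.slitPlane) :
    HasFDerivAt (fun u => Complex.log (g u))
      ((((1 : ℂ →L[ℂ] ℂ).smulRight (g z)⁻¹).restrictScalars ℝ).comp L) z := by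
  have := (((Complex.hasDerivAt_log hg).hasFDerivAt).restrictScalars ℝ).comp z h
  exact this

lemma hw_inv {g : ℂ → ℂ} {L : ℂ →L[ℝ] ℂ} {z : ℂ} (h : HasFDerivAt g L z)
    (hg : g z ≠ 0) :
    HasFDerivAt (fun u => (g u)⁻¹)
      ((((1 : ℂ →L[ℂ] ℂ).smulRight (-((g z) ^ 2)⁻¹)).restrictScalars ℝ).comp L) z := by
  have := (((hasDerivAt_inv hg).hasFDerivAt).restrictScalars ℝ).comp z h
  exact this


set_option maxHeartbeats 2000000 in
/-- for `f` holomorphic on `Ω` with `|f| < 1` and `f' ≠ 0`, the positive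
function `N` with `N² = (1/4)|f'|²/(1-|f|²)²` solves Liouville's equation
`∂_z ∂_{z̄} log N = 4 N²`. -/
theorem stmt6 (Ω : Set ℂ) (hΩ : IsOpen Ω) (f : ℂ → ℂ)
    (hf : DifferentiableOn ℂ f Ω)
    (hb : ∀ z ∈ Ω, ‖f z‖ < 1)
    (hd : ∀ z ∈ Ω, deriv f z ≠ 0)
    (N : ℂ → ℝ)
    (hN : ∀ z ∈ Ω, 0 < N z ∧
      (N z) ^ 2 = (1 / 4) * ‖deriv f z‖ ^ 2 / (1 - ‖f z‖ ^ 2) ^ 2) :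
    ∀ z ∈ Ω,
      wirtingerDz (fun w => wirtingerDzbar (fun u => (Real.log (N u) : ℂ)) w) z
        = 4 * ((N z : ℂ)) ^ 2 := by
  have hfa : AnalyticOnNhd ℂ f Ω := hf.analyticOnNhd hΩ
  have hf1 : ∀ w ∈ Ω, DifferentiableAt ℂ (deriv f) w := fun w hw =>
    ((hfa.deriv) w hw).differentiableAt
  have hf2 : ∀ w ∈ Ω, DifferentiableAt ℂ (deriv (deriv f)) w := fun w hw =>
    ((hfa.deriv.deriv) w hw).differentiableAt
  have hf0 : ∀ w ∈ Ω, DifferentiableAt ℂ f w := fun w hw =>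
    (hfa w hw).differentiableAt
  -- positivity facts
  have hQpos : ∀ w ∈ Ω, (0:ℝ) < 1 - normSq (f w) := by
    intro w hw
    have h1 := hb w hw
    have h2 : normSq (f w) = ‖f w‖ ^ 2 := (Complex.sq_norm _).symm
    nlinarith [norm_nonneg (f w)]
  have hPpos : ∀ w ∈ Ω, (0:ℝ) < normSq (deriv f w) := fun w hw =>
    Complex.normSq_pos.2 (hd w hw)
  -- the explicit logarithm
  set E : ℂ → ℂ := fun w =>
    (1/2) * Complex.log (deriv f w * conj (deriv f w))
      - Complex.log (1 - f w * conj (f w)) - (Real.log 2 : ℂ) with hE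
  have hQc : ∀ w, 1 - f w * conj (f w) = ((1 - normSq (f w) : ℝ) : ℂ) := by
    intro w; push_cast [Complex.mul_conj]; ring
  have hPc : ∀ w, deriv f w * conj (deriv f w) = ((normSq (deriv f w) : ℝ) : ℂ) :=
    fun w => Complex.mul_conj _
  have hEN : ∀ w ∈ Ω, (Real.log (N w) : ℂ) = E w := by
    intro w hw
    have habs : 0 < ‖deriv f w‖ := norm_pos_iff.mpr (hd w hw)
    have hq : 0 < 1 - ‖f w‖ ^ 2 := by
      have := hQpos w hw; rwa [← Complex.sq_norm] at this
    have hNval : N w = ‖deriv f w‖ / (2 * (1 - ‖f w‖ ^ 2)) := by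
      obtain ⟨h1, h2⟩ := hN w hw
      have hc : (N w) ^ 2 = (‖deriv f w‖ / (2 * (1 - ‖f w‖ ^ 2))) ^ 2 := by
        rw [h2]; field_simp; ring
      have := congrArg Real.sqrt hc
      rwa [Real.sqrt_sq h1.le, Real.sqrt_sq (by positivity)] at this
    rw [hE]
    simp only [hPc, hQc]
    rw [← Complex.ofReal_log (normSq_nonneg _), ← Complex.ofReal_log (hQpos w hw).le]
    push_cast
    rw [hNval, Real.log_div habs.ne' (by positivity),
      Real.log_mul two_ne_zero hq.ne', ← Complex.sq_norm, Real.log_pow, ← Complex.sq_norm (f w)]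
    push_cast
    ring
  -- the first Wirtinger derivative
  set A : ℂ → ℂ := fun w =>
    (1/2) * (conj (deriv (deriv f) w) * (conj (deriv f w))⁻¹)
      + f w * conj (deriv f w) * (1 - f w * conj (f w))⁻¹ with hA
  have hFA : ∀ w ∈ Ω, wirtingerDzbar (fun u => (Real.log (N u) : ℂ)) w = A w := by
    intro w hw
    have heq : (fun u => (Real.log (N u) : ℂ)) =ᶠ[nhds w] E := by
      filter_upwards [hΩ.mem_nhds hw] with u hu using hEN u hu
    have hstep : wirtingerDzbar (fun u => (Real.log (N u) : ℂ)) w = wirtingerDzbar E w := by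
      rw [wirtingerDzbar, wirtingerDzbar, heq.fderiv_eq]
    rw [hstep]
    -- build the derivative of E
    have h1 := hw_holo (deriv f) w (hf1 w hw)
    have h1c := hw_conj h1
    have hP := h1.mul h1c
    have hPmem : deriv f w * conj (deriv f w) ∈ Complex.slitPlane := by
      rw [hPc]; exact Complex.ofReal_mem_slitPlane.2 (hPpos w hw)
    have hlogP := hw_log hP hPmem
    have h0 := hw_holo f w (hf0 w hw)
    have h0c := hw_conj h0
    have hQ' := ((hasFDerivAt_const (1:ℂ) w).sub (h0.mul h0c))
    have hQmem : 1 - f w * conj (f w) ∈ Complex.slitPlane := by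
      rw [hQc]; exact Complex.ofReal_mem_slitPlane.2 (hQpos w hw)
    have hlogQ := hw_log hQ' hQmem
    have hEder := ((hlogP.const_mul ((1:ℂ)/2)).sub hlogQ).sub_const ((Real.log 2 : ℂ))
    erw [wdzbar_eq hEder, hA]
    have hane : conj (deriv f w) ≠ 0 := by
      simpa using hd w hw
    have hQne : (1 - f w * conj (f w)) ≠ 0 := by
      rw [hQc]; exact_mod_cast (hQpos w hw).ne'
    have hPne : deriv f w * conj (deriv f w) ≠ 0 := mul_ne_zero (hd w hw) hane
    simp only [ContinuousLinearMap.add_apply, ContinuousLinearMap.smul_apply,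
      ContinuousLinearMap.comp_apply, ContinuousLinearMap.sub_apply,
      ContinuousLinearMap.coe_restrictScalars', ContinuousLinearMap.smulRight_apply,
      ContinuousLinearMap.one_apply, smul_eq_mul, ContinuousLinearMap.coe_comp',
      Function.comp_apply, Complex.conjCLE_apply, map_mul, map_one, Complex.conj_I,
      ContinuousLinearMap.zero_apply, ContinuousLinearEquiv.coe_coe, Pi.sub_apply, Pi.mul_apply]
    field_simp
    ring_nf
    simp only [Complex.I_sq]
    linear_combination (2 * conj (deriv (deriv f) w) * (1 - f w * conj (f w))) * mul_inv_cancel₀ (hd w hw)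
  -- outer Wirtinger derivative
  intro z hz
  have heq2 : (fun w => wirtingerDzbar (fun u => (Real.log (N u) : ℂ)) w) =ᶠ[nhds z] A := by
    filter_upwards [hΩ.mem_nhds hz] with w hw using hFA w hw
  have hstep2 : wirtingerDz (fun w => wirtingerDzbar (fun u => (Real.log (N u) : ℂ)) w) z
      = wirtingerDz A z := by
    rw [wirtingerDz, wirtingerDz, heq2.fderiv_eq]
  rw [hstep2]
  have hane : conj (deriv f z) ≠ 0 := by simpa using hd z hz
  have hQne : (1 - f z * conj (f z)) ≠ 0 := by
    rw [hQc]; exact_mod_cast (hQpos z hz).ne'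
  have h2 := hw_holo (deriv (deriv f)) z (hf2 z hz)
  have h2c := hw_conj h2
  have h1 := hw_holo (deriv f) z (hf1 z hz)
  have h1c := hw_conj h1
  have hinv1 := hw_inv h1c hane
  have h0 := hw_holo f z (hf0 z hz)
  have h0c := hw_conj h0
  have hQ' := (hasFDerivAt_const (1:ℂ) z).sub (h0.mul h0c)
  have hinvQ := hw_inv hQ' hQne
  have hAder := ((h2c.mul hinv1).const_mul ((1:ℂ)/2)).add ((h0.mul h1c).mul hinvQ)
  rw [hA]
  erw [wdz_eq hAder]
  have e_ab : ∀ x : ℂ, ((‖x‖ : ℝ) : ℂ) ^ 2 = x * conj x := fun x => by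
    rw [← Complex.ofReal_pow, Complex.sq_norm]; exact (Complex.mul_conj x).symm
  have hNz : ((4:ℂ)) * ((N z : ℝ) : ℂ) ^ 2
      = deriv f z * conj (deriv f z) * ((1 - f z * conj (f z)) ^ 2)⁻¹ := by
    have := congrArg (fun r : ℝ => (r : ℂ)) (hN z hz).2
    push_cast at this
    rw [e_ab] at this
    have e2 : ((1:ℂ) - (‖f z‖ : ℝ) ^ 2) = 1 - f z * conj (f z) := by
      rw [e_ab]
    rw [e2] at this
    rw [this]
    have hQ2 : ((1 - f z * conj (f z)) ^ 2) ≠ 0 := pow_ne_zero _ hQne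
    field_simp
  rw [hNz]
  simp only [ContinuousLinearMap.add_apply, ContinuousLinearMap.smul_apply,
    ContinuousLinearMap.comp_apply, ContinuousLinearMap.sub_apply,
    ContinuousLinearMap.coe_restrictScalars', ContinuousLinearMap.smulRight_apply,
    ContinuousLinearMap.one_apply, smul_eq_mul, ContinuousLinearMap.coe_comp',
    Function.comp_apply, ContinuousLinearEquiv.coe_coe, Complex.conjCLE_apply,
    map_mul, map_one, Complex.conj_I, ContinuousLinearMap.zero_apply, Pi.sub_apply, Pi.mul_apply]
  field_simp [hane, hQne]
  ring_nf
  simp only [Complex.I_sq]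
  ring
end

section
/- Let A, M, N, B be complex matrices of sizes A : μ×(2ν), M : ν×(2ν), N : μ×μ, B : ν×μ, with N diagonal, real, and M Mᵀ = D invertible diagonal, A Mᵀ = 0, A Aᵀ = 0. If additionally M A^T = 0 (Takagi condition) and A† N + M† B = 0 and A* Mᵀ + 2 N Bᵀ = 0 hold, then B = 0 and the rows of A corresponding to strictly positive diagonal entries of N vanish. -/
open Matrix

/-- given the Takagi conditions `M Mᵀ = D` (invertible diagonal), `A Mᵀ = 0`,
`A Aᵀ = 0`, `M Aᵀ = 0`, together with the integrability conditions `Aᴴ N + Mᴴ B = 0` and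
`A* Mᵀ + 2 N Bᵀ = 0` for `N` real diagonal, one gets `B = 0` and the rows of `A`
corresponding to strictly positive diagonal entries of `N` vanish. -/
theorem stmt9 (μ ν : ℕ)
    (A : Matrix (Fin μ) (Fin (2 * ν)) ℂ) (M : Matrix (Fin ν) (Fin (2 * ν)) ℂ)
    (B : Matrix (Fin ν) (Fin μ) ℂ) (d : Fin μ → ℝ) (e : Fin ν → ℝ)
    (he : ∀ i, 0 < e i)
    (hMM : M * Mᵀ = Matrix.diagonal (fun i => (e i : ℂ)))
    (hAM : A * Mᵀ = 0) (hAA : A * Aᵀ = 0) (hMA : M * Aᵀ = 0)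
    (hAN : Aᴴ * (Matrix.diagonal fun i => (d i : ℂ)) + Mᴴ * B = 0)
    (hANB : A.map (starRingEnd ℂ) * Mᵀ
        + (2 : ℂ) • ((Matrix.diagonal fun i => (d i : ℂ)) * Bᵀ) = 0) :
    B = 0 ∧ ∀ i, 0 < d i → ∀ r, A i r = 0 := by
  have hB : B = 0 := by
    have h1 := congrArg Matrix.conjTranspose hAN
    simp only [Matrix.conjTranspose_add, Matrix.conjTranspose_mul,
      Matrix.conjTranspose_conjTranspose, Matrix.conjTranspose_zero,
      Matrix.diagonal_conjTranspose] at h1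
    have h2 := congrArg (· * Mᵀ) h1
    simp only [Matrix.add_mul, Matrix.zero_mul, Matrix.mul_assoc] at h2
    rw [hAM, hMM] at h2
    simp only [Matrix.mul_zero, zero_add] at h2
    ext i r
    have h3 := congrFun (congrFun h2 r) i
    simp only [Matrix.mul_diagonal, Matrix.conjTranspose_apply, Matrix.zero_apply] at h3
    have hei : (e i : ℂ) ≠ 0 := by
      exact_mod_cast (he i).ne'
    have := mul_eq_zero.mp h3
    rcases this with h | h
    · simpa using congrArg star h
    · exact absurd h hei
  refine ⟨hB, fun i hdi r => ?_⟩
  rw [hB] at hAN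
  simp only [Matrix.mul_zero, add_zero] at hAN
  have h4 := congrFun (congrFun hAN r) i
  simp only [Matrix.mul_diagonal, Matrix.conjTranspose_apply, Matrix.zero_apply] at h4
  have hdi' : (d i : ℂ) ≠ 0 := by exact_mod_cast hdi.ne'
  rcases mul_eq_zero.mp h4 with h | h
  · simpa using congrArg star h
  · exact absurd h hdi'
end

section
/- In so(p+1, p+1) with p odd, the element E = Σ_{k=0}^{(p-1)/2-1} (a_k η^{k+1}∧η̃^k + b_k θ^{k+1}∧θ̃^k) + c η̃^{(p-1)/2} ∧ θ̃^{(p-1)/2} together with F = -θ_C E and H = [E,F] forms an sl₂ triple with the prescribed weights H η^i = -(p-2i)η^i etc., if and only if a_k² = b_k² = (p-k)(k+1) and c² = ((p+1)/2)². -/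
/-!
STATEMENT 12: the Kostant–Sekiguchi triple in `so(p+1, p+1)`, `p = 2 qm + 1` odd.
Null basis `{η^k, η̃^k, θ^k, θ̃^k}`, k = 0,…,(p-1)/2 = qm, with `τ(η^i,η̃^j) = δ^{ij}`,
`τ(θ^i,θ̃^j) = δ^{ij}` (symmetric), two-forms acting as `w ↦ τ(v,w) u - τ(u,w) v`, and
the Cartan involution given by conjugation with the swap `η ↔ η̃`, `θ ↔ θ̃`.
-/

abbrev BasisIdx12 (q : ℕ) := (Fin q ⊕ Fin q) ⊕ (Fin q ⊕ Fin q)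

abbrev Vec12 (q : ℕ) := BasisIdx12 q → ℝ

def eta12 {q : ℕ} (i : Fin q) : Vec12 q := fun x => if x = Sum.inl (Sum.inl i) then 1 else 0
def etat12 {q : ℕ} (i : Fin q) : Vec12 q := fun x => if x = Sum.inl (Sum.inr i) then 1 else 0
def th12 {q : ℕ} (i : Fin q) : Vec12 q := fun x => if x = Sum.inr (Sum.inl i) then 1 else 0
def tht12 {q : ℕ} (i : Fin q) : Vec12 q := fun x => if x = Sum.inr (Sum.inr i) then 1 else 0

/-- The bilinear form `τ`, nonzero only on `τ(η^i,η̃^j) = δ^{ij}`, `τ(θ^i,θ̃^j) = δ^{ij}`. -/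
noncomputable def tau12 {q : ℕ} (x y : Vec12 q) : ℝ :=
  ∑ i : Fin q,
    (x (Sum.inl (Sum.inl i)) * y (Sum.inl (Sum.inr i))
      + x (Sum.inl (Sum.inr i)) * y (Sum.inl (Sum.inl i))
      + x (Sum.inr (Sum.inl i)) * y (Sum.inr (Sum.inr i))
      + x (Sum.inr (Sum.inr i)) * y (Sum.inr (Sum.inl i)))

/-- The two-form `u ∧ v` acting as `w ↦ τ(v,w) u - τ(u,w) v`. -/
noncomputable def wedge12 {q : ℕ} (u v : Vec12 q) : Vec12 q → Vec12 q :=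
  fun w => tau12 v w • u - tau12 u w • v

/-- Isometry implementing the Cartan involution: swap `η ↔ η̃` and `θ ↔ θ̃`. -/
def gInv12 {q : ℕ} (x : Vec12 q) : Vec12 q := fun b =>
  match b with
  | Sum.inl (Sum.inl i) => x (Sum.inl (Sum.inr i))
  | Sum.inl (Sum.inr i) => x (Sum.inl (Sum.inl i))
  | Sum.inr (Sum.inl i) => x (Sum.inr (Sum.inr i))
  | Sum.inr (Sum.inr i) => x (Sum.inr (Sum.inl i))

def lieBr12 {q : ℕ} (f g : Vec12 q → Vec12 q) : Vec12 q → Vec12 q :=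
  fun w => f (g w) - g (f w)

/-- `E = Σ_{k=0}^{(p-1)/2-1} (a_k η^{k+1}∧η̃^k + b_k θ^{k+1}∧θ̃^k) + c η̃^{(p-1)/2}∧θ̃^{(p-1)/2}`. -/
noncomputable def E12 (qm : ℕ) (a b : Fin qm → ℝ) (c : ℝ) :
    Vec12 (qm + 1) → Vec12 (qm + 1) :=
  (∑ k : Fin qm, (a k • wedge12 (eta12 k.succ) (etat12 k.castSucc)
      + b k • wedge12 (th12 k.succ) (tht12 k.castSucc)))
    + c • wedge12 (etat12 (Fin.last qm)) (tht12 (Fin.last qm))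

/-- `F = -θ_C E`. -/
noncomputable def F12 (qm : ℕ) (a b : Fin qm → ℝ) (c : ℝ) :
    Vec12 (qm + 1) → Vec12 (qm + 1) :=
  fun w => -gInv12 (E12 qm a b c (gInv12 w))

/-- `H = [E,F]`. -/
noncomputable def H12 (qm : ℕ) (a b : Fin qm → ℝ) (c : ℝ) :
    Vec12 (qm + 1) → Vec12 (qm + 1) :=
  lieBr12 (E12 qm a b c) (F12 qm a b c)

section
variable {q : ℕ}

lemma tauA (j : Fin q) (w : Vec12 q) : tau12 (eta12 j) w = w (Sum.inl (Sum.inr j)) := by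
  simp [tau12, eta12, Finset.sum_ite_eq', Finset.sum_ite_eq]

lemma tauB (j : Fin q) (w : Vec12 q) : tau12 (etat12 j) w = w (Sum.inl (Sum.inl j)) := by
  simp [tau12, etat12, Finset.sum_ite_eq', Finset.sum_ite_eq]

lemma tauC (j : Fin q) (w : Vec12 q) : tau12 (th12 j) w = w (Sum.inr (Sum.inr j)) := by
  simp [tau12, th12, Finset.sum_ite_eq', Finset.sum_ite_eq]

lemma tauD (j : Fin q) (w : Vec12 q) : tau12 (tht12 j) w = w (Sum.inr (Sum.inl j)) := by
  simp [tau12, tht12, Finset.sum_ite_eq', Finset.sum_ite_eq]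

end

lemma E12_apply (qm : ℕ) (a b : Fin qm → ℝ) (c : ℝ) (w : Vec12 (qm+1)) (x : BasisIdx12 (qm+1)) :
    E12 qm a b c w x =
      (∑ k : Fin qm,
        (a k * (w (Sum.inl (Sum.inl k.castSucc)) * eta12 k.succ x
              - w (Sum.inl (Sum.inr k.succ)) * etat12 k.castSucc x)
       + b k * (w (Sum.inr (Sum.inl k.castSucc)) * th12 k.succ x
              - w (Sum.inr (Sum.inr k.succ)) * tht12 k.castSucc x)))
      + c * (w (Sum.inr (Sum.inl (Fin.last qm))) * etat12 (Fin.last qm) x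
           - w (Sum.inl (Sum.inl (Fin.last qm))) * tht12 (Fin.last qm) x) := by
  simp [E12, wedge12, tauA, tauB, tauC, tauD, smul_eq_mul, mul_sub, mul_comm, mul_left_comm]
lemma E1 (qm : ℕ) (a b : Fin qm → ℝ) (c : ℝ) (w : Vec12 (qm+1)) (i : Fin (qm+1)) :
    E12 qm a b c w (Sum.inl (Sum.inl i)) =
      if h : 0 < i.1 then a ⟨i.1-1, by omega⟩ * w (Sum.inl (Sum.inl ⟨i.1-1, by omega⟩)) else 0 := by
  rw [E12_apply]
  simp only [eta12, etat12, th12, tht12, Sum.inl.injEq, Sum.inr.injEq, reduceCtorEq,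
    if_false, mul_zero, zero_mul, mul_one, sub_zero, zero_sub, add_zero, zero_add,
    neg_zero, Fin.castSucc_mk, ite_false]
  by_cases h : 0 < i.1
  · rw [dif_pos h, Finset.sum_eq_single (⟨i.1-1, by omega⟩ : Fin qm)]
    · rw [if_pos (Fin.ext (by simp; omega))]
      norm_num [Fin.castSucc_mk]
    · intro k _ hk
      have hne : ¬ i = k.succ := by
        intro hc; apply hk; apply Fin.ext
        have := congrArg Fin.val hc; simp at this ⊢; omega
      rw [if_neg hne]; ring
    · simp
  · rw [dif_neg h, Finset.sum_eq_zero]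
    intro k _
    have hne : ¬ i = k.succ := by
      intro hc; have := congrArg Fin.val hc; simp at this; omega
    rw [if_neg hne]; ring
lemma E2 (qm : ℕ) (a b : Fin qm → ℝ) (c : ℝ) (w : Vec12 (qm+1)) (i : Fin (qm+1)) :
    E12 qm a b c w (Sum.inl (Sum.inr i)) =
      if h : i.1 < qm then -(a ⟨i.1, h⟩) * w (Sum.inl (Sum.inr ⟨i.1+1, by omega⟩))
      else c * w (Sum.inr (Sum.inl (Fin.last qm))) := by
  rw [E12_apply]
  simp only [eta12, etat12, th12, tht12, Sum.inl.injEq, Sum.inr.injEq, reduceCtorEq,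
    if_false, mul_zero, zero_mul, mul_one, sub_zero, zero_sub, add_zero, zero_add,
    neg_zero, ite_false]
  by_cases h : i.1 < qm
  · rw [dif_pos h]
    have hl : ¬ i = Fin.last qm := by
      intro hc; have := congrArg Fin.val hc; simp [Fin.last] at this; omega
    rw [if_neg hl, Finset.sum_eq_single (⟨i.1, h⟩ : Fin qm)]
    · rw [if_pos (Fin.ext (by simp))]
      norm_num [Fin.succ_mk]
    · intro k _ hk
      have hne : ¬ i = k.castSucc := by
        intro hc; apply hk; apply Fin.ext
        have := congrArg Fin.val hc; simp at this ⊢; omega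
      rw [if_neg hne]; ring
    · simp
  · rw [dif_neg h]
    have hl : i = Fin.last qm := Fin.ext (by simp [Fin.last]; omega)
    rw [if_pos hl, Finset.sum_eq_zero]
    · ring
    · intro k _
      have hne : ¬ i = k.castSucc := by
        intro hc; have := congrArg Fin.val hc; simp at this; omega
      rw [if_neg hne]; ring

lemma E3 (qm : ℕ) (a b : Fin qm → ℝ) (c : ℝ) (w : Vec12 (qm+1)) (i : Fin (qm+1)) :
    E12 qm a b c w (Sum.inr (Sum.inl i)) =
      if h : 0 < i.1 then b ⟨i.1-1, by omega⟩ * w (Sum.inr (Sum.inl ⟨i.1-1, by omega⟩)) else 0 := by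
  rw [E12_apply]
  simp only [eta12, etat12, th12, tht12, Sum.inl.injEq, Sum.inr.injEq, reduceCtorEq,
    if_false, mul_zero, zero_mul, mul_one, sub_zero, zero_sub, add_zero, zero_add,
    neg_zero, Fin.castSucc_mk, ite_false]
  by_cases h : 0 < i.1
  · rw [dif_pos h, Finset.sum_eq_single (⟨i.1-1, by omega⟩ : Fin qm)]
    · rw [if_pos (Fin.ext (by simp; omega))]
      norm_num [Fin.castSucc_mk]
    · intro k _ hk
      have hne : ¬ i = k.succ := by
        intro hc; apply hk; apply Fin.ext
        have := congrArg Fin.val hc; simp at this ⊢; omega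
      rw [if_neg hne]; ring
    · simp
  · rw [dif_neg h, Finset.sum_eq_zero]
    intro k _
    have hne : ¬ i = k.succ := by
      intro hc; have := congrArg Fin.val hc; simp at this; omega
    rw [if_neg hne]; ring

lemma E4 (qm : ℕ) (a b : Fin qm → ℝ) (c : ℝ) (w : Vec12 (qm+1)) (i : Fin (qm+1)) :
    E12 qm a b c w (Sum.inr (Sum.inr i)) =
      if h : i.1 < qm then -(b ⟨i.1, h⟩) * w (Sum.inr (Sum.inr ⟨i.1+1, by omega⟩))
      else -(c * w (Sum.inl (Sum.inl (Fin.last qm)))) := by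
  rw [E12_apply]
  simp only [eta12, etat12, th12, tht12, Sum.inl.injEq, Sum.inr.injEq, reduceCtorEq,
    if_false, mul_zero, zero_mul, mul_one, sub_zero, zero_sub, add_zero, zero_add,
    neg_zero, ite_false]
  by_cases h : i.1 < qm
  · rw [dif_pos h]
    have hl : ¬ i = Fin.last qm := by
      intro hc; have := congrArg Fin.val hc; simp [Fin.last] at this; omega
    rw [if_neg hl, Finset.sum_eq_single (⟨i.1, h⟩ : Fin qm)]
    · rw [if_pos (Fin.ext (by simp))]
      norm_num [Fin.succ_mk]
    · intro k _ hk
      have hne : ¬ i = k.castSucc := by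
        intro hc; apply hk; apply Fin.ext
        have := congrArg Fin.val hc; simp at this ⊢; omega
      rw [if_neg hne]; ring
    · simp
  · rw [dif_neg h]
    have hl : i = Fin.last qm := Fin.ext (by simp [Fin.last]; omega)
    rw [if_pos hl, Finset.sum_eq_zero]
    · ring
    · intro k _
      have hne : ¬ i = k.castSucc := by
        intro hc; have := congrArg Fin.val hc; simp at this; omega
      rw [if_neg hne]; ring
lemma F1 (qm : ℕ) (a b : Fin qm → ℝ) (c : ℝ) (w : Vec12 (qm+1)) (i : Fin (qm+1)) :
    F12 qm a b c w (Sum.inl (Sum.inl i)) =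
      if h : i.1 < qm then a ⟨i.1, h⟩ * w (Sum.inl (Sum.inl ⟨i.1+1, by omega⟩))
      else -(c * w (Sum.inr (Sum.inr (Fin.last qm)))) := by
  have h0 : F12 qm a b c w (Sum.inl (Sum.inl i))
      = -(E12 qm a b c (gInv12 w) (Sum.inl (Sum.inr i))) := rfl
  rw [h0, E2]
  split_ifs with h
  · simp [gInv12]
  · simp [gInv12]

lemma F2 (qm : ℕ) (a b : Fin qm → ℝ) (c : ℝ) (w : Vec12 (qm+1)) (i : Fin (qm+1)) :
    F12 qm a b c w (Sum.inl (Sum.inr i)) =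
      if h : 0 < i.1 then -(a ⟨i.1-1, by omega⟩) * w (Sum.inl (Sum.inr ⟨i.1-1, by omega⟩)) else 0 := by
  have h0 : F12 qm a b c w (Sum.inl (Sum.inr i))
      = -(E12 qm a b c (gInv12 w) (Sum.inl (Sum.inl i))) := rfl
  rw [h0, E1]
  split_ifs with h
  · simp [gInv12]
  · simp

lemma F3 (qm : ℕ) (a b : Fin qm → ℝ) (c : ℝ) (w : Vec12 (qm+1)) (i : Fin (qm+1)) :
    F12 qm a b c w (Sum.inr (Sum.inl i)) =
      if h : i.1 < qm then b ⟨i.1, h⟩ * w (Sum.inr (Sum.inl ⟨i.1+1, by omega⟩))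
      else c * w (Sum.inl (Sum.inr (Fin.last qm))) := by
  have h0 : F12 qm a b c w (Sum.inr (Sum.inl i))
      = -(E12 qm a b c (gInv12 w) (Sum.inr (Sum.inr i))) := rfl
  rw [h0, E4]
  split_ifs with h
  · simp [gInv12]
  · simp [gInv12]

lemma F4 (qm : ℕ) (a b : Fin qm → ℝ) (c : ℝ) (w : Vec12 (qm+1)) (i : Fin (qm+1)) :
    F12 qm a b c w (Sum.inr (Sum.inr i)) =
      if h : 0 < i.1 then -(b ⟨i.1-1, by omega⟩) * w (Sum.inr (Sum.inr ⟨i.1-1, by omega⟩)) else 0 := by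
  have h0 : F12 qm a b c w (Sum.inr (Sum.inr i))
      = -(E12 qm a b c (gInv12 w) (Sum.inr (Sum.inl i))) := rfl
  rw [h0, E3]
  split_ifs with h
  · simp [gInv12]
  · simp
noncomputable def lamA (qm : ℕ) (a : Fin qm → ℝ) (c : ℝ) (i : Fin (qm+1)) : ℝ :=
  (if h : 0 < i.1 then (a ⟨i.1-1, by omega⟩)^2 else 0)
  - (if h : i.1 < qm then (a ⟨i.1, h⟩)^2 else c^2)

lemma H1 (qm : ℕ) (a b : Fin qm → ℝ) (c : ℝ) (w : Vec12 (qm+1)) (i : Fin (qm+1)) :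
    H12 qm a b c w (Sum.inl (Sum.inl i)) = lamA qm a c i * w (Sum.inl (Sum.inl i)) := by
  have h0 : H12 qm a b c w (Sum.inl (Sum.inl i))
      = E12 qm a b c (F12 qm a b c w) (Sum.inl (Sum.inl i))
        - F12 qm a b c (E12 qm a b c w) (Sum.inl (Sum.inl i)) := rfl
  rw [h0, E1, F1, lamA]
  by_cases h : 0 < i.1 <;> by_cases h' : i.1 < qm
  · rw [dif_pos h, dif_pos h', dif_pos h, dif_pos h', F1, E1,
      dif_pos (by omega : i.1 - 1 < qm),
      dif_pos (by omega : 0 < i.1 + 1),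
      show (⟨i.1 - 1 + 1, by omega⟩ : Fin (qm+1)) = i from Fin.ext (by simp only []; omega),
      show (⟨i.1 + 1 - 1, by omega⟩ : Fin (qm+1)) = i from Fin.ext (by simp only []; omega),
      show (⟨i.1 - 1, by omega⟩ : Fin qm) = ⟨i.1-1, by omega⟩ from rfl,
      show (⟨i.1 + 1 - 1, by omega⟩ : Fin qm) = ⟨i.1, by omega⟩ from Fin.ext (by simp only []; omega)]
    ring
  · rw [dif_pos h, dif_neg h', dif_pos h, dif_neg h', F1, E4,
      dif_pos (by omega : i.1 - 1 < qm),
      dif_neg (by simp : ¬ ((Fin.last qm)).1 < qm),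
      show (⟨i.1 - 1 + 1, by omega⟩ : Fin (qm+1)) = i from Fin.ext (by simp only []; omega),
      show Fin.last qm = i from Fin.ext (by simp [Fin.last]; omega)]
    ring
  · rw [dif_neg h, dif_pos h', dif_neg h, dif_pos h', E1,
      dif_pos (by omega : 0 < i.1 + 1),
      show (⟨i.1 + 1 - 1, by omega⟩ : Fin (qm+1)) = i from Fin.ext (by simp only []; omega),
      show (⟨i.1 + 1 - 1, by omega⟩ : Fin qm) = ⟨i.1, by omega⟩ from Fin.ext (by simp only []; omega)]
    ring
  · rw [dif_neg h, dif_neg h', dif_neg h, dif_neg h', E4,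
      dif_neg (by simp : ¬ ((Fin.last qm)).1 < qm),
      show Fin.last qm = i from Fin.ext (by simp [Fin.last]; omega)]
    ring
lemma H2 (qm : ℕ) (a b : Fin qm → ℝ) (c : ℝ) (w : Vec12 (qm+1)) (i : Fin (qm+1)) :
    H12 qm a b c w (Sum.inl (Sum.inr i)) = -(lamA qm a c i) * w (Sum.inl (Sum.inr i)) := by
  have h0 : H12 qm a b c w (Sum.inl (Sum.inr i))
      = E12 qm a b c (F12 qm a b c w) (Sum.inl (Sum.inr i))
        - F12 qm a b c (E12 qm a b c w) (Sum.inl (Sum.inr i)) := rfl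
  rw [h0, E2, F2, lamA]
  by_cases h : 0 < i.1 <;> by_cases h' : i.1 < qm
  · rw [dif_pos h, dif_pos h', dif_pos h, dif_pos h', F2, E2,
      dif_pos (by omega : 0 < i.1 + 1),
      dif_pos (by omega : i.1 - 1 < qm),
      show (⟨i.1 + 1 - 1, by omega⟩ : Fin (qm+1)) = i from Fin.ext (by simp only []; omega),
      show (⟨i.1 - 1 + 1, by omega⟩ : Fin (qm+1)) = i from Fin.ext (by simp only []; omega),
      show (⟨i.1 + 1 - 1, by omega⟩ : Fin qm) = ⟨i.1, by omega⟩ from Fin.ext (by simp only []; omega),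
      show (⟨i.1 - 1, by omega⟩ : Fin qm) = ⟨i.1 - 1, by omega⟩ from rfl]
    ring
  · rw [dif_pos h, dif_neg h', dif_pos h, dif_neg h', F3, E2,
      dif_neg (by simp : ¬ ((Fin.last qm)).1 < qm),
      dif_pos (by omega : i.1 - 1 < qm),
      show (⟨i.1 - 1 + 1, by omega⟩ : Fin (qm+1)) = i from Fin.ext (by simp only []; omega),
      show Fin.last qm = i from Fin.ext (by simp [Fin.last]; omega)]
    ring
  · rw [dif_neg h, dif_pos h', dif_neg h, dif_pos h', F2,
      dif_pos (by omega : 0 < i.1 + 1),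
      show (⟨i.1 + 1 - 1, by omega⟩ : Fin (qm+1)) = i from Fin.ext (by simp only []; omega),
      show (⟨i.1 + 1 - 1, by omega⟩ : Fin qm) = ⟨i.1, by omega⟩ from Fin.ext (by simp only []; omega)]
    ring
  · rw [dif_neg h, dif_neg h', dif_neg h, dif_neg h', F3,
      dif_neg (by simp : ¬ ((Fin.last qm)).1 < qm),
      show Fin.last qm = i from Fin.ext (by simp [Fin.last]; omega)]
    ring

lemma H3 (qm : ℕ) (a b : Fin qm → ℝ) (c : ℝ) (w : Vec12 (qm+1)) (i : Fin (qm+1)) :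
    H12 qm a b c w (Sum.inr (Sum.inl i)) = lamA qm b c i * w (Sum.inr (Sum.inl i)) := by
  have h0 : H12 qm a b c w (Sum.inr (Sum.inl i))
      = E12 qm a b c (F12 qm a b c w) (Sum.inr (Sum.inl i))
        - F12 qm a b c (E12 qm a b c w) (Sum.inr (Sum.inl i)) := rfl
  rw [h0, E3, F3, lamA]
  by_cases h : 0 < i.1 <;> by_cases h' : i.1 < qm
  · rw [dif_pos h, dif_pos h', dif_pos h, dif_pos h', F3, E3,
      dif_pos (by omega : i.1 - 1 < qm),
      dif_pos (by omega : 0 < i.1 + 1),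
      show (⟨i.1 - 1 + 1, by omega⟩ : Fin (qm+1)) = i from Fin.ext (by simp only []; omega),
      show (⟨i.1 + 1 - 1, by omega⟩ : Fin (qm+1)) = i from Fin.ext (by simp only []; omega),
      show (⟨i.1 - 1, by omega⟩ : Fin qm) = ⟨i.1-1, by omega⟩ from rfl,
      show (⟨i.1 + 1 - 1, by omega⟩ : Fin qm) = ⟨i.1, by omega⟩ from Fin.ext (by simp only []; omega)]
    ring
  · rw [dif_pos h, dif_neg h', dif_pos h, dif_neg h', F3, E2,
      dif_pos (by omega : i.1 - 1 < qm),
      dif_neg (by simp : ¬ ((Fin.last qm)).1 < qm),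
      show (⟨i.1 - 1 + 1, by omega⟩ : Fin (qm+1)) = i from Fin.ext (by simp only []; omega),
      show Fin.last qm = i from Fin.ext (by simp [Fin.last]; omega)]
    ring
  · rw [dif_neg h, dif_pos h', dif_neg h, dif_pos h', E3,
      dif_pos (by omega : 0 < i.1 + 1),
      show (⟨i.1 + 1 - 1, by omega⟩ : Fin (qm+1)) = i from Fin.ext (by simp only []; omega),
      show (⟨i.1 + 1 - 1, by omega⟩ : Fin qm) = ⟨i.1, by omega⟩ from Fin.ext (by simp only []; omega)]
    ring
  · rw [dif_neg h, dif_neg h', dif_neg h, dif_neg h', E2,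
      dif_neg (by simp : ¬ ((Fin.last qm)).1 < qm),
      show Fin.last qm = i from Fin.ext (by simp [Fin.last]; omega)]
    ring

lemma H4 (qm : ℕ) (a b : Fin qm → ℝ) (c : ℝ) (w : Vec12 (qm+1)) (i : Fin (qm+1)) :
    H12 qm a b c w (Sum.inr (Sum.inr i)) = -(lamA qm b c i) * w (Sum.inr (Sum.inr i)) := by
  have h0 : H12 qm a b c w (Sum.inr (Sum.inr i))
      = E12 qm a b c (F12 qm a b c w) (Sum.inr (Sum.inr i))
        - F12 qm a b c (E12 qm a b c w) (Sum.inr (Sum.inr i)) := rfl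
  rw [h0, E4, F4, lamA]
  by_cases h : 0 < i.1 <;> by_cases h' : i.1 < qm
  · rw [dif_pos h, dif_pos h', dif_pos h, dif_pos h', F4, E4,
      dif_pos (by omega : 0 < i.1 + 1),
      dif_pos (by omega : i.1 - 1 < qm),
      show (⟨i.1 + 1 - 1, by omega⟩ : Fin (qm+1)) = i from Fin.ext (by simp only []; omega),
      show (⟨i.1 - 1 + 1, by omega⟩ : Fin (qm+1)) = i from Fin.ext (by simp only []; omega),
      show (⟨i.1 + 1 - 1, by omega⟩ : Fin qm) = ⟨i.1, by omega⟩ from Fin.ext (by simp only []; omega),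
      show (⟨i.1 - 1, by omega⟩ : Fin qm) = ⟨i.1 - 1, by omega⟩ from rfl]
    ring
  · rw [dif_pos h, dif_neg h', dif_pos h, dif_neg h', F1, E4,
      dif_neg (by simp : ¬ ((Fin.last qm)).1 < qm),
      dif_pos (by omega : i.1 - 1 < qm),
      show (⟨i.1 - 1 + 1, by omega⟩ : Fin (qm+1)) = i from Fin.ext (by simp only []; omega),
      show Fin.last qm = i from Fin.ext (by simp [Fin.last]; omega)]
    ring
  · rw [dif_neg h, dif_pos h', dif_neg h, dif_pos h', F4,
      dif_pos (by omega : 0 < i.1 + 1),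
      show (⟨i.1 + 1 - 1, by omega⟩ : Fin (qm+1)) = i from Fin.ext (by simp only []; omega),
      show (⟨i.1 + 1 - 1, by omega⟩ : Fin qm) = ⟨i.1, by omega⟩ from Fin.ext (by simp only []; omega)]
    ring
  · rw [dif_neg h, dif_neg h', dif_neg h, dif_neg h', F1,
      dif_neg (by simp : ¬ ((Fin.last qm)).1 < qm),
      show Fin.last qm = i from Fin.ext (by simp [Fin.last]; omega)]
    ring
lemma lam_mk (qm : ℕ) (a : Fin qm → ℝ) (c : ℝ) (n : ℕ) (hn : n < qm+1) :
    lamA qm a c ⟨n, hn⟩ =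
      (if h : 0 < n then (a ⟨n-1, by omega⟩)^2 else 0)
      - (if h : n < qm then (a ⟨n, h⟩)^2 else c^2) := rfl

lemma lamChar (qm : ℕ) (a : Fin qm → ℝ) (c : ℝ) :
    (∀ i : Fin (qm+1), lamA qm a c i = -(2*(qm:ℝ)+1-2*((i:ℕ):ℝ))) ↔
    ((∀ k : Fin qm, (a k)^2 = (2*(qm:ℝ)+1-((k:ℕ):ℝ))*(((k:ℕ):ℝ)+1)) ∧ c^2 = ((qm:ℝ)+1)^2) := by
  constructor
  · intro h
    have key : ∀ n, ∀ hn : n < qm, (a ⟨n, hn⟩)^2 = (2*(qm:ℝ)+1-(n:ℝ))*((n:ℝ)+1) := by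
      intro n
      induction n with
      | zero =>
        intro hn
        have h0 := h ⟨0, by omega⟩
        rw [lam_mk, dif_neg (by omega), dif_pos hn] at h0
        simp at h0 ⊢
        linarith
      | succ m ih =>
        intro hn
        have hm : m < qm := by omega
        have h1 := h ⟨m+1, by omega⟩
        rw [lam_mk, dif_pos (by omega), dif_pos hn] at h1
        rw [show (⟨m+1-1, by omega⟩ : Fin qm) = ⟨m, hm⟩ from Fin.ext (by simp only []; omega)] at h1
        have ihm := ih hm
        simp at h1
        push_cast at h1 ihm ⊢
        nlinarith [h1, ihm]
    constructor
    · intro k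
      have := key k.1 k.2
      simpa using this
    · have hq := h ⟨qm, by omega⟩
      rw [lam_mk, dif_neg (by omega : ¬ qm < qm)] at hq
      rw [show ((⟨qm, by omega⟩ : Fin (qm+1)) : ℕ) = qm from rfl] at hq
      by_cases hqz : 0 < qm
      · rw [dif_pos hqz] at hq
        have hk := key (qm-1) (by omega)
        have e : ((qm - 1 : ℕ) : ℝ) = (qm : ℝ) - 1 := by
          rw [Nat.cast_sub (by omega : 1 ≤ qm)]; norm_num
        rw [e] at hk
        nlinarith [hq, hk]
      · rw [dif_neg hqz] at hq
        have hq0 : qm = 0 := by omega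
        subst hq0
        push_cast at hq ⊢
        linarith
  · rintro ⟨ha, hc⟩ i
    rcases i with ⟨n, hn⟩
    rw [lam_mk]
    simp only []
    by_cases h : 0 < n <;> by_cases h' : n < qm
    · rw [dif_pos h, dif_pos h']
      have h1 := ha ⟨n-1, by omega⟩
      have h2 := ha ⟨n, h'⟩
      simp only [] at h1 h2 ⊢
      have e : ((n - 1 : ℕ) : ℝ) = (n : ℝ) - 1 := by
        rw [Nat.cast_sub (by omega : 1 ≤ n)]; norm_num
      linear_combination h1 - h2 + (2*(qm:ℝ) - ((n-1:ℕ):ℝ) - (n:ℝ) + 1) * e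
    · rw [dif_pos h, dif_neg h']
      have hnq : n = qm := by omega
      subst hnq
      have h1 := ha ⟨n-1, by omega⟩
      simp only [] at h1 ⊢
      have e : ((n - 1 : ℕ) : ℝ) = (n : ℝ) - 1 := by
        rw [Nat.cast_sub (by omega : 1 ≤ n)]; norm_num
      linear_combination h1 - hc + ((n:ℝ) + 1 - ((n-1:ℕ):ℝ)) * e
    · rw [dif_neg h, dif_pos h']
      have hn0 : n = 0 := by omega
      subst hn0
      have h2 := ha ⟨0, h'⟩
      simp only [] at h2 ⊢
      rw [h2]
      push_cast
      ring
    · rw [dif_neg h, dif_neg h']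
      have hn0 : n = 0 := by omega
      have hq0 : qm = 0 := by omega
      subst hn0; subst hq0
      rw [hc]
      push_cast
      ring
section
variable {qm : ℕ} {a : Fin qm → ℝ} {c : ℝ}

lemma lam_step (hA : ∀ i : Fin (qm+1), lamA qm a c i = -(2*(qm:ℝ)+1-2*((i:ℕ):ℝ)))
    (i : Fin (qm+1)) (h : 0 < i.1) :
    lamA qm a c i = lamA qm a c ⟨i.1-1, by omega⟩ + 2 := by
  rw [hA i, hA ⟨i.1-1, by omega⟩]
  have e : (((⟨i.1-1, by omega⟩ : Fin (qm+1)) : ℕ) : ℝ) = ((i:ℕ):ℝ) - 1 := by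
    have e0 : ((⟨i.1-1, by omega⟩ : Fin (qm+1)) : ℕ) = i.1 - 1 := rfl
    rw [e0, Nat.cast_sub (by omega : 1 ≤ i.1)]
    norm_num
  rw [e]; ring

lemma lam_succ (hA : ∀ i : Fin (qm+1), lamA qm a c i = -(2*(qm:ℝ)+1-2*((i:ℕ):ℝ)))
    (i : Fin (qm+1)) (h : i.1 < qm) :
    lamA qm a c ⟨i.1+1, by omega⟩ = lamA qm a c i + 2 := by
  rw [hA i, hA ⟨i.1+1, by omega⟩]
  have e : (((⟨i.1+1, by omega⟩ : Fin (qm+1)) : ℕ) : ℝ) = ((i:ℕ):ℝ) + 1 := by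
    have e0 : ((⟨i.1+1, by omega⟩ : Fin (qm+1)) : ℕ) = i.1 + 1 := rfl
    rw [e0]; push_cast; ring
  rw [e]; ring

lemma lam_top (hA : ∀ i : Fin (qm+1), lamA qm a c i = -(2*(qm:ℝ)+1-2*((i:ℕ):ℝ)))
    (i : Fin (qm+1)) (h : ¬ i.1 < qm) :
    lamA qm a c i = -1 := by
  rw [hA i]
  have e : ((i:ℕ):ℝ) = (qm:ℝ) := by
    have : (i:ℕ) = qm := by omega
    rw [this]
  rw [e]; ring

end
lemma weights (qm : ℕ) (a b : Fin qm → ℝ) (c : ℝ)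
    (hA : ∀ i : Fin (qm+1), lamA qm a c i = -(2*(qm:ℝ)+1-2*((i:ℕ):ℝ)))
    (hB : ∀ i : Fin (qm+1), lamA qm b c i = -(2*(qm:ℝ)+1-2*((i:ℕ):ℝ))) :
    ∀ i : Fin (qm + 1),
        H12 qm a b c (eta12 i) = (-(2 * (qm : ℝ) + 1 - 2 * (i : ℕ))) • eta12 i ∧
        H12 qm a b c (th12 i) = (-(2 * (qm : ℝ) + 1 - 2 * (i : ℕ))) • th12 i ∧
        H12 qm a b c (etat12 i) = (2 * (qm : ℝ) + 1 - 2 * (i : ℕ)) • etat12 i ∧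
        H12 qm a b c (tht12 i) = (2 * (qm : ℝ) + 1 - 2 * (i : ℕ)) • tht12 i := by
  intro i
  refine ⟨?_, ?_, ?_, ?_⟩
  · funext x
    rcases x with (j | j) | (j | j)
    · rw [H1]
      by_cases hj : j = i
      · subst hj; rw [hA j]; simp [eta12]
      · simp [eta12, hj]
    · rw [H2]; simp [eta12]
    · rw [H3]; simp [eta12]
    · rw [H4]; simp [eta12]
  · funext x
    rcases x with (j | j) | (j | j)
    · rw [H1]; simp [th12]
    · rw [H2]; simp [th12]
    · rw [H3]
      by_cases hj : j = i
      · subst hj; rw [hB j]; simp [th12]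
      · simp [th12, hj]
    · rw [H4]; simp [th12]
  · funext x
    rcases x with (j | j) | (j | j)
    · rw [H1]; simp [etat12]
    · rw [H2]
      by_cases hj : j = i
      · subst hj; rw [hA j]; simp [etat12]
      · simp [etat12, hj]
    · rw [H3]; simp [etat12]
    · rw [H4]; simp [etat12]
  · funext x
    rcases x with (j | j) | (j | j)
    · rw [H1]; simp [tht12]
    · rw [H2]; simp [tht12]
    · rw [H3]; simp [tht12]
    · rw [H4]
      by_cases hj : j = i
      · subst hj; rw [hB j]; simp [tht12]
      · simp [tht12, hj]
lemma bracketHE (qm : ℕ) (a b : Fin qm → ℝ) (c : ℝ)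
    (hA : ∀ i : Fin (qm+1), lamA qm a c i = -(2*(qm:ℝ)+1-2*((i:ℕ):ℝ)))
    (hB : ∀ i : Fin (qm+1), lamA qm b c i = -(2*(qm:ℝ)+1-2*((i:ℕ):ℝ))) :
    lieBr12 (H12 qm a b c) (E12 qm a b c) = (2 : ℝ) • E12 qm a b c := by
  funext w x
  have h0 : lieBr12 (H12 qm a b c) (E12 qm a b c) w x
      = H12 qm a b c (E12 qm a b c w) x - E12 qm a b c (H12 qm a b c w) x := rfl
  have h0' : ((2 : ℝ) • E12 qm a b c) w x = 2 * E12 qm a b c w x := rfl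
  rw [h0, h0']
  rcases x with (i | i) | (i | i)
  · rw [H1, E1, E1]
    by_cases h : 0 < i.1
    · rw [dif_pos h, dif_pos h, H1, lam_step hA i h]; ring
    · rw [dif_neg h, dif_neg h]; ring
  · rw [H2, E2, E2]
    by_cases h : i.1 < qm
    · rw [dif_pos h, dif_pos h, H2, lam_succ hA i h]; ring
    · rw [dif_neg h, dif_neg h, H3, lam_top hA i h, lam_top hB (Fin.last qm) (by simp)]; ring
  · rw [H3, E3, E3]
    by_cases h : 0 < i.1
    · rw [dif_pos h, dif_pos h, H3, lam_step hB i h]; ring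
    · rw [dif_neg h, dif_neg h]; ring
  · rw [H4, E4, E4]
    by_cases h : i.1 < qm
    · rw [dif_pos h, dif_pos h, H4, lam_succ hB i h]; ring
    · rw [dif_neg h, dif_neg h, H1, lam_top hB i h, lam_top hA (Fin.last qm) (by simp)]; ring

lemma bracketHF (qm : ℕ) (a b : Fin qm → ℝ) (c : ℝ)
    (hA : ∀ i : Fin (qm+1), lamA qm a c i = -(2*(qm:ℝ)+1-2*((i:ℕ):ℝ)))
    (hB : ∀ i : Fin (qm+1), lamA qm b c i = -(2*(qm:ℝ)+1-2*((i:ℕ):ℝ))) :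
    lieBr12 (H12 qm a b c) (F12 qm a b c) = (-2 : ℝ) • F12 qm a b c := by
  funext w x
  have h0 : lieBr12 (H12 qm a b c) (F12 qm a b c) w x
      = H12 qm a b c (F12 qm a b c w) x - F12 qm a b c (H12 qm a b c w) x := rfl
  have h0' : ((-2 : ℝ) • F12 qm a b c) w x = -2 * F12 qm a b c w x := rfl
  rw [h0, h0']
  rcases x with (i | i) | (i | i)
  · rw [H1, F1, F1]
    by_cases h : i.1 < qm
    · rw [dif_pos h, dif_pos h, H1, lam_succ hA i h]; ring
    · rw [dif_neg h, dif_neg h, H4, lam_top hA i h, lam_top hB (Fin.last qm) (by simp)]; ring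
  · rw [H2, F2, F2]
    by_cases h : 0 < i.1
    · rw [dif_pos h, dif_pos h, H2, lam_step hA i h]; ring
    · rw [dif_neg h, dif_neg h]; ring
  · rw [H3, F3, F3]
    by_cases h : i.1 < qm
    · rw [dif_pos h, dif_pos h, H3, lam_succ hB i h]; ring
    · rw [dif_neg h, dif_neg h, H2, lam_top hB i h, lam_top hA (Fin.last qm) (by simp)]; ring
  · rw [H4, F4, F4]
    by_cases h : 0 < i.1
    · rw [dif_pos h, dif_pos h, H4, lam_step hB i h]; ring
    · rw [dif_neg h, dif_neg h]; ring
theorem stmt12 (qm : ℕ) (a b : Fin qm → ℝ) (c : ℝ) :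
    (lieBr12 (H12 qm a b c) (E12 qm a b c) = (2 : ℝ) • E12 qm a b c ∧
     lieBr12 (H12 qm a b c) (F12 qm a b c) = (-2 : ℝ) • F12 qm a b c ∧
     (∀ i : Fin (qm + 1),
        H12 qm a b c (eta12 i) = (-(2 * (qm : ℝ) + 1 - 2 * (i : ℕ))) • eta12 i ∧
        H12 qm a b c (th12 i) = (-(2 * (qm : ℝ) + 1 - 2 * (i : ℕ))) • th12 i ∧
        H12 qm a b c (etat12 i) = (2 * (qm : ℝ) + 1 - 2 * (i : ℕ)) • etat12 i ∧
        H12 qm a b c (tht12 i) = (2 * (qm : ℝ) + 1 - 2 * (i : ℕ)) • tht12 i))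
    ↔ ((∀ k : Fin qm,
          (a k) ^ 2 = (2 * (qm : ℝ) + 1 - (k : ℕ)) * ((k : ℕ) + 1) ∧
          (b k) ^ 2 = (2 * (qm : ℝ) + 1 - (k : ℕ)) * ((k : ℕ) + 1)) ∧
        c ^ 2 = ((qm : ℝ) + 1) ^ 2) := by
  constructor
  · rintro ⟨-, -, h3⟩
    have hA : ∀ i : Fin (qm+1), lamA qm a c i = -(2*(qm:ℝ)+1-2*((i:ℕ):ℝ)) := by
      intro i
      have hh := congrFun ((h3 i).1) (Sum.inl (Sum.inl i))
      rw [H1] at hh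
      simpa [eta12] using hh
    have hB : ∀ i : Fin (qm+1), lamA qm b c i = -(2*(qm:ℝ)+1-2*((i:ℕ):ℝ)) := by
      intro i
      have hh := congrFun ((h3 i).2.1) (Sum.inr (Sum.inl i))
      rw [H3] at hh
      simpa [th12] using hh
    obtain ⟨haf, hcf⟩ := (lamChar qm a c).1 hA
    obtain ⟨hbf, -⟩ := (lamChar qm b c).1 hB
    exact ⟨fun k => ⟨haf k, hbf k⟩, hcf⟩
  · rintro ⟨hab, hc⟩
    have hA := (lamChar qm a c).2 ⟨fun k => (hab k).1, hc⟩
    have hB := (lamChar qm b c).2 ⟨fun k => (hab k).2, hc⟩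
    exact ⟨bracketHE qm a b c hA hB, bracketHF qm a b c hA hB, weights qm a b c hA hB⟩
end
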